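/- arXiv:2209.00598 — 11 statements merged into one kernel-verified Lean document; each statement's English description precedes it below -/
import Mathlib

section
/- Let (X, ‖·‖) be a real normed vector space and let u, v ∈ X be distinct. Suppose x, y ∈ X are distinct and C ∈ (0,1) is such that ‖x − u‖ = ‖y − u‖ = C·‖u − v‖ and ‖v − x‖ = ‖v − y‖ = (1 − C)·‖u − v‖. Define γ : [0,1] → X by γ(z) = ((C − z)/C)·u + (z/C)·x for 0 ≤ z ≤ C and γ(z) = ((1 − z)/(1 − C))·x + ((z − C)/(1 − C))·v for C < z ≤ 1, and define σ : [0,1] → X analogously with y in place of x. Then γ and σ are geodesics from u to v, and they are disjoint, i.e. whenever γ(w) = σ(z) for w, z ∈ [0,1], the common value lies in {u, v}. -/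
/-- A geodesic from `u` to `v` in a metric space `X`: a map `γ : [0,1] → X` with
`γ 0 = u`, `γ 1 = v` and `d(γ s, γ t) = |s - t| * d(u,v)` for all `s, t ∈ [0,1]`. -/
def IsGeodesic {X : Type*} [MetricSpace X] (u v : X) (γ : unitInterval → X) : Prop :=
  γ 0 = u ∧ γ 1 = v ∧
    ∀ s t : unitInterval, dist (γ s) (γ t) = |(s : ℝ) - (t : ℝ)| * dist u v

/-- Two geodesics from `u` to `v` are disjoint if their images intersect only at
points in `{u, v}`. -/
def DisjointGeodesics {X : Type*} [MetricSpace X] (u v : X)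
    (γ σ : unitInterval → X) : Prop :=
  ∀ w z : unitInterval, γ w = σ z → γ w = u ∨ γ w = v

lemma path_props {X : Type*} [NormedAddCommGroup X] [NormedSpace ℝ X]
    (u v x : X) (C : ℝ) (hC : C ∈ Set.Ioo (0 : ℝ) 1)
    (hxu : ‖x - u‖ = C * ‖u - v‖) (hvx : ‖v - x‖ = (1 - C) * ‖u - v‖)
    (γ : unitInterval → X)
    (hγ : ∀ z : unitInterval, γ z =
      if (z : ℝ) ≤ C then ((C - (z : ℝ)) / C) • u + ((z : ℝ) / C) • x
      else ((1 - (z : ℝ)) / (1 - C)) • x + (((z : ℝ) - C) / (1 - C)) • v) :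
    IsGeodesic u v γ ∧
    (∀ s : unitInterval, (s : ℝ) ≤ C → γ s - u = ((s : ℝ) / C) • (x - u)) ∧
    (∀ s : unitInterval, C < (s : ℝ) → v - γ s = ((1 - (s : ℝ)) / (1 - C)) • (v - x)) := by
  obtain ⟨hC0, hC1⟩ := hC
  have hC0' : C ≠ 0 := hC0.ne'
  have hC1' : (0:ℝ) < 1 - C := by linarith
  have h1C : (1:ℝ) - C ≠ 0 := hC1'.ne'
  have A : ∀ s : unitInterval, (s : ℝ) ≤ C → γ s - u = ((s : ℝ) / C) • (x - u) := by
    intro s hs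
    rw [hγ s, if_pos hs]
    match_scalars <;> field_simp <;> ring
  have B : ∀ s : unitInterval, C < (s : ℝ) → v - γ s = ((1 - (s : ℝ)) / (1 - C)) • (v - x) := by
    intro s hs
    rw [hγ s, if_neg (not_le.2 hs)]
    match_scalars <;> field_simp <;> ring
  have nA : ∀ s : unitInterval, (s : ℝ) ≤ C → ‖γ s - u‖ = (s : ℝ) * ‖u - v‖ := by
    intro s hs
    rw [A s hs, norm_smul, Real.norm_eq_abs, abs_of_nonneg (div_nonneg s.2.1 hC0.le), hxu]
    field_simp
  have nB : ∀ s : unitInterval, C < (s : ℝ) → ‖v - γ s‖ = (1 - (s : ℝ)) * ‖u - v‖ := by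
    intro s hs
    rw [B s hs, norm_smul, Real.norm_eq_abs,
      abs_of_nonneg (div_nonneg (by linarith [s.2.2]) hC1'.le), hvx]
    field_simp
  have hγ0 : γ 0 = u := by
    rw [hγ 0, if_pos (by simpa using hC0.le)]
    simp [hC0']
  have hγ1 : γ 1 = v := by
    rw [hγ 1, if_neg (by simpa using hC1)]
    simp [sub_ne_zero.2 (by linarith : (1:ℝ) ≠ C)]
  have D1 : ∀ s t : unitInterval, (s : ℝ) ≤ C → (t : ℝ) ≤ C →
      ‖γ s - γ t‖ = |(s : ℝ) - t| * ‖u - v‖ := by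
    intro s t hs ht
    have e : γ s - γ t = (((s:ℝ) - t) / C) • (x - u) := by
      have e1 := A s hs; have e2 := A t ht
      have h3 : γ s - γ t = (γ s - u) - (γ t - u) := by abel
      rw [h3, e1, e2, ← sub_smul, ← sub_div]
    rw [e, norm_smul, Real.norm_eq_abs, abs_div, abs_of_pos hC0, hxu]
    field_simp
  have D2 : ∀ s t : unitInterval, C < (s : ℝ) → C < (t : ℝ) →
      ‖γ s - γ t‖ = |(s : ℝ) - t| * ‖u - v‖ := by
    intro s t hs ht
    have e : γ s - γ t = (((s:ℝ) - t) / (1 - C)) • (v - x) := by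
      have e1 := B s hs; have e2 := B t ht
      have h3 : γ s - γ t = (v - γ t) - (v - γ s) := by abel
      rw [h3, e1, e2, ← sub_smul, ← sub_div]
      ring_nf
    rw [e, norm_smul, Real.norm_eq_abs, abs_div, abs_of_pos hC1', hvx]
    field_simp
  have key : ∀ s t : unitInterval, (s : ℝ) ≤ (t : ℝ) →
      dist (γ s) (γ t) = ((t : ℝ) - s) * ‖u - v‖ := by
    intro s t hst
    rw [dist_eq_norm]
    rcases le_or_gt (t : ℝ) C with ht | ht
    · rw [D1 s t (hst.trans ht) ht, abs_of_nonpos (by linarith)]; ring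
    rcases le_or_gt (s : ℝ) C with hs | hs
    · -- mixed case
      have hcmem : C ∈ unitInterval := ⟨hC0.le, hC1.le⟩
      set c : unitInterval := ⟨C, hcmem⟩ with hc
      have hcC : (c : ℝ) = C := rfl
      have hgc : γ c = x := by
        rw [hγ c, if_pos (le_of_eq hcC)]
        simp [hcC, hC0']
      have hsc : ‖γ s - γ c‖ = (C - (s:ℝ)) * ‖u - v‖ := by
        rw [D1 s c hs (le_of_eq hcC), hcC, abs_of_nonpos (by linarith)]; ring
      have hct : ‖γ c - γ t‖ = ((t:ℝ) - C) * ‖u - v‖ := by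
        have e0 : γ c - γ t = (v - γ t) - (v - x) := by rw [hgc]; abel
        have hco : (1 - (t:ℝ)) / (1 - C) - 1 = (C - (t:ℝ)) / (1 - C) := by
          field_simp; ring
        have e1 : ((1 - (t:ℝ)) / (1 - C)) • (v - x) - (v - x)
            = ((C - (t:ℝ)) / (1 - C)) • (v - x) := by
          rw [← hco, sub_smul, one_smul]
        rw [e0, B t ht, e1, norm_smul, Real.norm_eq_abs, abs_div, abs_of_pos hC1',
          abs_of_nonpos (by linarith : C - (t:ℝ) ≤ 0), hvx]
        field_simp; ring
      have tri1 : ‖γ s - γ t‖ ≤ ‖γ s - γ c‖ + ‖γ c - γ t‖ := by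
        simpa [dist_eq_norm] using dist_triangle (γ s) (γ c) (γ t)
      have tri2 : ‖u - v‖ ≤ ‖γ s - u‖ + ‖γ s - γ t‖ + ‖v - γ t‖ := by
        have h4 := dist_triangle4 u (γ s) (γ t) v
        simp only [dist_eq_norm] at h4
        calc ‖u - v‖ ≤ ‖u - γ s‖ + ‖γ s - γ t‖ + ‖γ t - v‖ := h4
          _ = ‖γ s - u‖ + ‖γ s - γ t‖ + ‖v - γ t‖ := by rw [norm_sub_rev u, norm_sub_rev (γ t)]
      rw [nA s hs, nB t ht] at tri2
      rw [hsc, hct] at tri1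
      nlinarith [tri1, tri2]
    · rw [D2 s t hs ht, abs_of_nonpos (by linarith)]; ring
  refine ⟨⟨hγ0, hγ1, ?_⟩, A, B⟩
  intro s t
  rcases le_total (s : ℝ) (t : ℝ) with h | h
  · rw [key s t h, abs_of_nonpos (by linarith), dist_eq_norm u v]; ring
  · rw [dist_comm, key t s h, abs_of_nonneg (by linarith), dist_eq_norm u v]

theorem statement1 {X : Type*} [NormedAddCommGroup X] [NormedSpace ℝ X]
    (u v x y : X) (huv : u ≠ v) (hxy : x ≠ y) (C : ℝ) (hC : C ∈ Set.Ioo (0 : ℝ) 1)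
    (hxu : ‖x - u‖ = C * ‖u - v‖) (hyu : ‖y - u‖ = C * ‖u - v‖)
    (hvx : ‖v - x‖ = (1 - C) * ‖u - v‖) (hvy : ‖v - y‖ = (1 - C) * ‖u - v‖)
    (γ σ : unitInterval → X)
    (hγ : ∀ z : unitInterval, γ z =
      if (z : ℝ) ≤ C then ((C - (z : ℝ)) / C) • u + ((z : ℝ) / C) • x
      else ((1 - (z : ℝ)) / (1 - C)) • x + (((z : ℝ) - C) / (1 - C)) • v)
    (hσ : ∀ z : unitInterval, σ z =
      if (z : ℝ) ≤ C then ((C - (z : ℝ)) / C) • u + ((z : ℝ) / C) • y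
      else ((1 - (z : ℝ)) / (1 - C)) • y + (((z : ℝ) - C) / (1 - C)) • v) :
    IsGeodesic u v γ ∧ IsGeodesic u v σ ∧ DisjointGeodesics u v γ σ := by
  obtain ⟨hC0, hC1⟩ := hC
  have hC0' : C ≠ 0 := hC0.ne'
  have hC1' : (0:ℝ) < 1 - C := by linarith
  have h1C : (1:ℝ) - C ≠ 0 := hC1'.ne'
  have huvn : (0:ℝ) < ‖u - v‖ := by rwa [norm_sub_pos_iff]
  obtain ⟨G1, A1, B1⟩ := path_props u v x C ⟨hC0, hC1⟩ hxu hvx γ hγ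
  obtain ⟨G2, A2, B2⟩ := path_props u v y C ⟨hC0, hC1⟩ hyu hvy σ hσ
  refine ⟨G1, G2, ?_⟩
  intro w z h
  rcases le_or_gt (w : ℝ) C with hw | hw <;> rcases le_or_gt (z : ℝ) C with hz | hz
  · -- both ≤ C
    have e1 := A1 w hw
    have e2 := A2 z hz
    have nw : ‖γ w - u‖ = (w:ℝ) * ‖u - v‖ := by
      rw [e1, norm_smul, Real.norm_eq_abs, abs_of_nonneg (div_nonneg w.2.1 hC0.le), hxu]
      field_simp
    have nz : ‖σ z - u‖ = (z:ℝ) * ‖u - v‖ := by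
      rw [e2, norm_smul, Real.norm_eq_abs, abs_of_nonneg (div_nonneg z.2.1 hC0.le), hyu]
      field_simp
    have hwz : (w:ℝ) = (z:ℝ) := by
      have heq : ‖γ w - u‖ = ‖σ z - u‖ := by rw [h]
      rw [nw, nz] at heq
      exact mul_right_cancel₀ huvn.ne' heq
    have e3 : ((w:ℝ)/C) • (x - u) = ((w:ℝ)/C) • (y - u) := by
      rw [← e1, h, e2, hwz]
    have e4 : ((w:ℝ)/C) • (x - y) = 0 := by
      have h5 : ((w:ℝ)/C) • (x - u) - ((w:ℝ)/C) • (y - u) = 0 := sub_eq_zero.2 e3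
      rw [← smul_sub, sub_sub_sub_cancel_right] at h5
      exact h5
    rcases smul_eq_zero.1 e4 with h0 | h0
    · have hw0 : (w:ℝ) = 0 := by
        rcases div_eq_zero_iff.1 h0 with h' | h'
        · exact h'
        · exact absurd h' hC0'
      left
      have : γ w - u = 0 := by rw [e1, hw0]; simp
      exact sub_eq_zero.1 this
    · exact absurd (sub_eq_zero.1 h0) hxy
  · -- w ≤ C < z : impossible
    exfalso
    have e1 := A1 w hw
    have e2 := B2 z hz
    have nw : ‖γ w - u‖ = (w:ℝ) * ‖u - v‖ := by
      rw [e1, norm_smul, Real.norm_eq_abs, abs_of_nonneg (div_nonneg w.2.1 hC0.le), hxu]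
      field_simp
    have nz : ‖v - σ z‖ = (1 - (z:ℝ)) * ‖u - v‖ := by
      rw [e2, norm_smul, Real.norm_eq_abs,
        abs_of_nonneg (div_nonneg (by linarith [z.2.2]) hC1'.le), hvy]
      field_simp
    have tri : ‖u - v‖ ≤ ‖γ w - u‖ + ‖v - σ z‖ := by
      have e5 : u - v = (u - γ w) + (σ z - v) := by rw [← h]; abel
      calc ‖u - v‖ = ‖(u - γ w) + (σ z - v)‖ := by rw [← e5]
        _ ≤ ‖u - γ w‖ + ‖σ z - v‖ := norm_add_le _ _
        _ = ‖γ w - u‖ + ‖v - σ z‖ := by rw [norm_sub_rev u, norm_sub_rev (σ z)]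
    rw [nw, nz] at tri
    nlinarith
  · -- z ≤ C < w : impossible
    exfalso
    have e1 := B1 w hw
    have e2 := A2 z hz
    have nw : ‖v - γ w‖ = (1 - (w:ℝ)) * ‖u - v‖ := by
      rw [e1, norm_smul, Real.norm_eq_abs,
        abs_of_nonneg (div_nonneg (by linarith [w.2.2]) hC1'.le), hvx]
      field_simp
    have nz : ‖σ z - u‖ = (z:ℝ) * ‖u - v‖ := by
      rw [e2, norm_smul, Real.norm_eq_abs, abs_of_nonneg (div_nonneg z.2.1 hC0.le), hyu]
      field_simp
    have tri : ‖u - v‖ ≤ ‖σ z - u‖ + ‖v - γ w‖ := by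
      have e5 : u - v = (u - σ z) + (γ w - v) := by rw [h]; abel
      calc ‖u - v‖ = ‖(u - σ z) + (γ w - v)‖ := by rw [← e5]
        _ ≤ ‖u - σ z‖ + ‖γ w - v‖ := norm_add_le _ _
        _ = ‖σ z - u‖ + ‖v - γ w‖ := by rw [norm_sub_rev u, norm_sub_rev (γ w)]
    rw [nw, nz] at tri
    nlinarith
  · -- both > C
    have e1 := B1 w hw
    have e2 := B2 z hz
    have nw : ‖v - γ w‖ = (1 - (w:ℝ)) * ‖u - v‖ := by
      rw [e1, norm_smul, Real.norm_eq_abs,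
        abs_of_nonneg (div_nonneg (by linarith [w.2.2]) hC1'.le), hvx]
      field_simp
    have nz : ‖v - σ z‖ = (1 - (z:ℝ)) * ‖u - v‖ := by
      rw [e2, norm_smul, Real.norm_eq_abs,
        abs_of_nonneg (div_nonneg (by linarith [z.2.2]) hC1'.le), hvy]
      field_simp
    have hwz : (w:ℝ) = (z:ℝ) := by
      have heq : ‖v - γ w‖ = ‖v - σ z‖ := by rw [h]
      rw [nw, nz] at heq
      have := mul_right_cancel₀ huvn.ne' heq
      linarith
    have e3 : ((1 - (w:ℝ))/(1 - C)) • (v - x) = ((1 - (w:ℝ))/(1 - C)) • (v - y) := by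
      rw [← e1, h, e2, hwz]
    have e4 : ((1 - (w:ℝ))/(1 - C)) • (y - x) = 0 := by
      have h5 : ((1 - (w:ℝ))/(1 - C)) • (v - x) - ((1 - (w:ℝ))/(1 - C)) • (v - y) = 0 :=
        sub_eq_zero.2 e3
      rw [← smul_sub, sub_sub_sub_cancel_left] at h5
      exact h5
    rcases smul_eq_zero.1 e4 with h0 | h0
    · have hw1 : (w:ℝ) = 1 := by
        rcases div_eq_zero_iff.1 h0 with h' | h'
        · linarith
        · exact absurd h' h1C
      right
      have : v - γ w = 0 := by rw [e1, hw1]; simp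
      exact (sub_eq_zero.1 this).symm
    · exact absurd (sub_eq_zero.1 h0).symm hxy
end

section
/- Let (X, ‖·‖) be a real normed vector space and let u, v ∈ X be distinct. The following are equivalent: (1) there are at least two distinct geodesics from u to v; (2) there is an uncountable family of pairwise-disjoint geodesics from u to v; (3) there exist C ∈ (0,1) and distinct x, y ∈ X such that ‖x − u‖ = ‖y − u‖ = C·‖u − v‖ and ‖v − x‖ = ‖v − y‖ = (1 − C)·‖u − v‖. -/
section Aux

variable {X : Type*} [NormedAddCommGroup X] [NormedSpace ℝ X]

/-- The broken path `u → p → v`, with corner at parameter `C`. -/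
noncomputable def brokenPath (u v p : X) (C : ℝ) (t : ℝ) : X :=
  if t ≤ C then u + (t / C) • (p - u) else p + ((t - C) / (1 - C)) • (v - p)

variable {u v p : X} {C : ℝ}

lemma brokenPath_le (ht : (t : ℝ) ≤ C) :
    brokenPath u v p C t = u + (t / C) • (p - u) := if_pos ht

lemma brokenPath_gt (ht : C < (t : ℝ)) :
    brokenPath u v p C t = p + ((t - C) / (1 - C)) • (v - p) := if_neg (not_le.2 ht)

lemma norm_brokenPath_sub_u (hC : C ∈ Set.Ioo (0:ℝ) 1)
    (hp1 : ‖p - u‖ = C * ‖u - v‖) {s : ℝ} (hs0 : 0 ≤ s) (hsC : s ≤ C) :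
    ‖brokenPath u v p C s - u‖ = s * ‖u - v‖ := by
  rw [brokenPath_le hsC]
  have : u + (s / C) • (p - u) - u = (s / C) • (p - u) := by abel
  rw [this, norm_smul, Real.norm_eq_abs, abs_of_nonneg (div_nonneg hs0 hC.1.le), hp1]
  have hC0 : C ≠ 0 := ne_of_gt hC.1
  field_simp

lemma norm_brokenPath_sub_p_le (hC : C ∈ Set.Ioo (0:ℝ) 1)
    (hp1 : ‖p - u‖ = C * ‖u - v‖) {s : ℝ} (hs0 : 0 ≤ s) (hsC : s ≤ C) :
    ‖brokenPath u v p C s - p‖ = (C - s) * ‖u - v‖ := by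
  rw [brokenPath_le hsC]
  have : u + (s / C) • (p - u) - p = (s / C - 1) • (p - u) := by
    rw [sub_smul, one_smul]; abel
  rw [this, norm_smul, Real.norm_eq_abs, abs_of_nonpos (by
    rw [sub_nonpos]; exact (div_le_one hC.1).2 hsC), hp1]
  have hC0 : C ≠ 0 := ne_of_gt hC.1
  field_simp
  ring

lemma norm_brokenPath_sub_p_gt (hC : C ∈ Set.Ioo (0:ℝ) 1)
    (hp2 : ‖v - p‖ = (1 - C) * ‖u - v‖) {t : ℝ} (htC : C < t) (ht1 : t ≤ 1) :
    ‖brokenPath u v p C t - p‖ = (t - C) * ‖u - v‖ := by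
  rw [brokenPath_gt htC]
  have : p + ((t - C) / (1 - C)) • (v - p) - p = ((t - C) / (1 - C)) • (v - p) := by abel
  have h1C : (0:ℝ) < 1 - C := by linarith [hC.2]
  rw [this, norm_smul, Real.norm_eq_abs,
    abs_of_nonneg (div_nonneg (by linarith) h1C.le), hp2]
  have h1C0 : (1:ℝ) - C ≠ 0 := ne_of_gt h1C
  field_simp

lemma norm_brokenPath_sub_v (hC : C ∈ Set.Ioo (0:ℝ) 1)
    (hp2 : ‖v - p‖ = (1 - C) * ‖u - v‖) {t : ℝ} (htC : C < t) (ht1 : t ≤ 1) :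
    ‖brokenPath u v p C t - v‖ = (1 - t) * ‖u - v‖ := by
  rw [brokenPath_gt htC]
  have h1C : (0:ℝ) < 1 - C := by linarith [hC.2]
  have : p + ((t - C) / (1 - C)) • (v - p) - v = ((t - C) / (1 - C) - 1) • (v - p) := by
    rw [sub_smul, one_smul]; abel
  rw [this, norm_smul, Real.norm_eq_abs, abs_of_nonpos (by
    rw [sub_nonpos]; exact (div_le_one h1C).2 (by linarith)), hp2]
  have : |(t - C) / (1 - C) - 1| = (1 - t) / (1 - C) := by
    rw [abs_of_nonpos (by rw [sub_nonpos]; exact (div_le_one h1C).2 (by linarith))]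
    field_simp
    ring
  field_simp
  ring

lemma brokenPath_dist_le (hC : C ∈ Set.Ioo (0:ℝ) 1)
    (hp1 : ‖p - u‖ = C * ‖u - v‖) (hp2 : ‖v - p‖ = (1 - C) * ‖u - v‖)
    {s t : ℝ} (hs : s ∈ Set.Icc (0:ℝ) 1) (ht : t ∈ Set.Icc (0:ℝ) 1) (hst : s ≤ t) :
    ‖brokenPath u v p C s - brokenPath u v p C t‖ = (t - s) * ‖u - v‖ := by
  have hC0 : (0:ℝ) < C := hC.1
  have h1C : (0:ℝ) < 1 - C := by linarith [hC.2]
  rcases le_or_gt t C with htC | htC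
  · rw [brokenPath_le (le_trans hst htC), brokenPath_le htC]
    have : u + (s / C) • (p - u) - (u + (t / C) • (p - u)) = ((s - t) / C) • (p - u) := by
      rw [sub_div, sub_smul]; abel
    rw [this, norm_smul, Real.norm_eq_abs, abs_div, abs_of_pos hC0,
      abs_of_nonpos (by linarith), hp1]
    field_simp
    ring
  · rcases lt_or_ge C s with hsC | hsC
    · rw [brokenPath_gt hsC, brokenPath_gt htC]
      have e : (s - C) / (1 - C) - (t - C) / (1 - C) = (s - t) / (1 - C) := by
        field_simp
        ring
      have : p + ((s - C) / (1 - C)) • (v - p) - (p + ((t - C) / (1 - C)) • (v - p))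
          = ((s - t) / (1 - C)) • (v - p) := by
        rw [← e, sub_smul]; abel
      rw [this, norm_smul, Real.norm_eq_abs, abs_div, abs_of_pos h1C,
        abs_of_nonpos (by linarith), hp2]
      field_simp
      ring
    · -- mixed case : s ≤ C < t
      have h1 : ‖brokenPath u v p C s - p‖ = (C - s) * ‖u - v‖ :=
        norm_brokenPath_sub_p_le hC hp1 hs.1 hsC
      have h2 : ‖brokenPath u v p C t - p‖ = (t - C) * ‖u - v‖ :=
        norm_brokenPath_sub_p_gt hC hp2 htC ht.2
      have h3 : ‖brokenPath u v p C s - u‖ = s * ‖u - v‖ :=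
        norm_brokenPath_sub_u hC hp1 hs.1 hsC
      have h4 : ‖brokenPath u v p C t - v‖ = (1 - t) * ‖u - v‖ :=
        norm_brokenPath_sub_v hC hp2 htC ht.2
      have hub : ‖brokenPath u v p C s - brokenPath u v p C t‖ ≤ (t - s) * ‖u - v‖ := by
        calc ‖brokenPath u v p C s - brokenPath u v p C t‖
            ≤ ‖brokenPath u v p C s - p‖ + ‖p - brokenPath u v p C t‖ :=
              norm_sub_le_norm_sub_add_norm_sub _ _ _
          _ = (C - s) * ‖u - v‖ + (t - C) * ‖u - v‖ := by
              rw [h1, norm_sub_rev p, h2]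
          _ = (t - s) * ‖u - v‖ := by ring
      have hlb : ‖u - v‖ ≤ s * ‖u - v‖ + ‖brokenPath u v p C s - brokenPath u v p C t‖
          + (1 - t) * ‖u - v‖ := by
        calc ‖u - v‖ ≤ ‖u - brokenPath u v p C s‖ + ‖brokenPath u v p C s - v‖ :=
              norm_sub_le_norm_sub_add_norm_sub _ _ _
          _ ≤ ‖u - brokenPath u v p C s‖ +
              (‖brokenPath u v p C s - brokenPath u v p C t‖ + ‖brokenPath u v p C t - v‖) :=
              add_le_add_right (norm_sub_le_norm_sub_add_norm_sub _ _ _) _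
          _ = s * ‖u - v‖ + ‖brokenPath u v p C s - brokenPath u v p C t‖
              + (1 - t) * ‖u - v‖ := by
              rw [norm_sub_rev u, h3, h4]; ring
      linarith
  
lemma brokenPath_isGeodesic (hC : C ∈ Set.Ioo (0:ℝ) 1)
    (hp1 : ‖p - u‖ = C * ‖u - v‖) (hp2 : ‖v - p‖ = (1 - C) * ‖u - v‖) :
    IsGeodesic u v (fun t : unitInterval => brokenPath u v p C (t : ℝ)) := by
  refine ⟨?_, ?_, ?_⟩
  · show brokenPath u v p C 0 = u
    rw [brokenPath_le (by exact_mod_cast hC.1.le)]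
    simp
  · show brokenPath u v p C 1 = v
    rw [brokenPath_gt (by exact_mod_cast hC.2)]
    rw [div_self (by linarith [hC.2] : (1:ℝ) - C ≠ 0), one_smul]
    abel
  · intro s t
    rw [dist_eq_norm, dist_eq_norm]
    rcases le_total (s:ℝ) (t:ℝ) with h | h
    · rw [brokenPath_dist_le hC hp1 hp2 s.2 t.2 h, abs_of_nonpos (by linarith)]
      ring
    · rw [norm_sub_rev, brokenPath_dist_le hC hp1 hp2 t.2 s.2 h,
        abs_of_nonneg (by linarith)]

end Aux

theorem statement3 {X : Type*} [NormedAddCommGroup X] [NormedSpace ℝ X]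
    (u v : X) (huv : u ≠ v) :
    List.TFAE [
      -- (1) at least two distinct geodesics from u to v
      ∃ γ σ : unitInterval → X, IsGeodesic u v γ ∧ IsGeodesic u v σ ∧ γ ≠ σ,
      -- (2) an uncountable family of pairwise-disjoint geodesics from u to v
      ∃ S : Set (unitInterval → X), ¬ S.Countable ∧ (∀ γ ∈ S, IsGeodesic u v γ) ∧
        S.Pairwise (DisjointGeodesics u v),
      -- (3) existence of two distinct "intermediate" points
      ∃ C ∈ Set.Ioo (0 : ℝ) 1, ∃ x y : X, x ≠ y ∧
        ‖x - u‖ = C * ‖u - v‖ ∧ ‖y - u‖ = C * ‖u - v‖ ∧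
        ‖v - x‖ = (1 - C) * ‖u - v‖ ∧ ‖v - y‖ = (1 - C) * ‖u - v‖] := by
  have hd : (0:ℝ) < ‖u - v‖ := by
    rw [norm_pos_iff, sub_ne_zero]; exact huv
  tfae_have 1 → 3 := by
    rintro ⟨γ, σ, hγ, hσ, hne⟩
    obtain ⟨t, htne⟩ : ∃ t, γ t ≠ σ t := by
      by_contra h
      push_neg at h
      exact hne (funext h)
    have ht0 : t ≠ 0 := by rintro rfl; rw [hγ.1, hσ.1] at htne; exact htne rfl
    have ht1 : t ≠ 1 := by rintro rfl; rw [hγ.2.1, hσ.2.1] at htne; exact htne rfl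
    have ht0' : (0:ℝ) < t := lt_of_le_of_ne t.2.1 (fun h => ht0 (Subtype.ext h.symm))
    have ht1' : (t:ℝ) < 1 := lt_of_le_of_ne t.2.2 (fun h => ht1 (Subtype.ext h))
    refine ⟨t, ⟨ht0', ht1'⟩, γ t, σ t, htne, ?_, ?_, ?_, ?_⟩
    · have := hγ.2.2 t 0
      rw [hγ.1, dist_eq_norm, dist_eq_norm] at this
      simpa [abs_of_nonneg t.2.1] using this
    · have := hσ.2.2 t 0
      rw [hσ.1, dist_eq_norm, dist_eq_norm] at this
      simpa [abs_of_nonneg t.2.1] using this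
    · have := hγ.2.2 1 t
      rw [hγ.2.1, dist_eq_norm, dist_eq_norm] at this
      simpa [abs_of_nonneg (by linarith : (0:ℝ) ≤ 1 - t)] using this
    · have := hσ.2.2 1 t
      rw [hσ.2.1, dist_eq_norm, dist_eq_norm] at this
      simpa [abs_of_nonneg (by linarith : (0:ℝ) ≤ 1 - t)] using this
  tfae_have 3 → 2 := by
    rintro ⟨C, hC, x, y, hxy, hx1, hy1, hx2, hy2⟩
    set d := ‖u - v‖ with hdd
    -- the family of midpoints
    set P : ℝ → X := fun l => x + l • (y - x) with hP
    have hPu : ∀ l ∈ Set.Icc (0:ℝ) 1, ‖P l - u‖ = C * d ∧ ‖v - P l‖ = (1 - C) * d := by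
      intro l hl
      have e1 : P l - u = (1 - l) • (x - u) + l • (y - u) := by
        simp only [hP, smul_sub, sub_smul, one_smul]; abel
      have e2 : v - P l = (1 - l) • (v - x) + l • (v - y) := by
        simp only [hP, smul_sub, sub_smul, one_smul]; abel
      have h1 : ‖P l - u‖ ≤ C * d := by
        rw [e1]
        calc ‖(1 - l) • (x - u) + l • (y - u)‖ ≤ ‖(1 - l) • (x - u)‖ + ‖l • (y - u)‖ :=
            norm_add_le _ _
          _ = (1 - l) * (C * d) + l * (C * d) := by
            rw [norm_smul, norm_smul, Real.norm_eq_abs, Real.norm_eq_abs,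
              abs_of_nonneg (by linarith [hl.2]), abs_of_nonneg hl.1, hx1, hy1]
          _ = C * d := by ring
      have h2 : ‖v - P l‖ ≤ (1 - C) * d := by
        rw [e2]
        calc ‖(1 - l) • (v - x) + l • (v - y)‖ ≤ ‖(1 - l) • (v - x)‖ + ‖l • (v - y)‖ :=
            norm_add_le _ _
          _ = (1 - l) * ((1 - C) * d) + l * ((1 - C) * d) := by
            rw [norm_smul, norm_smul, Real.norm_eq_abs, Real.norm_eq_abs,
              abs_of_nonneg (by linarith [hl.2]), abs_of_nonneg hl.1, hx2, hy2]
          _ = (1 - C) * d := by ring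
      have h3 : d ≤ ‖P l - u‖ + ‖v - P l‖ := by
        calc d = ‖u - v‖ := rfl
          _ ≤ ‖u - P l‖ + ‖P l - v‖ := norm_sub_le_norm_sub_add_norm_sub _ _ _
          _ = ‖P l - u‖ + ‖v - P l‖ := by
              rw [norm_sub_rev u (P l), norm_sub_rev (P l) v]
      constructor <;> linarith
    have hPinj : Set.InjOn P (Set.Icc 0 1) := by
      intro a _ b _ hab
      have : (a - b) • (y - x) = 0 := by
        have := hab
        simp only [hP] at this
        rw [sub_smul]
        rw [add_right_inj] at this
        rw [this]; abel
      rcases smul_eq_zero.1 this with h | h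
      · linarith [sub_eq_zero.1 (by exact_mod_cast h)]
      · exact absurd (sub_eq_zero.1 h).symm hxy
    set G : ℝ → (unitInterval → X) :=
      fun l => (fun t : unitInterval => brokenPath u v (P l) C (t : ℝ)) with hG
    have hGgeo : ∀ l ∈ Set.Icc (0:ℝ) 1, IsGeodesic u v (G l) := fun l hl =>
      brokenPath_isGeodesic hC (hPu l hl).1 (hPu l hl).2
    -- G l at parameter C equals P l
    have hGC : ∀ l, G l ⟨C, hC.1.le, hC.2.le⟩ = P l := by
      intro l
      show brokenPath u v (P l) C C = P l
      rw [brokenPath_le le_rfl, div_self (ne_of_gt hC.1), one_smul]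
      abel
    have hGinj : Set.InjOn G (Set.Icc 0 1) := by
      intro a ha b hb hab
      apply hPinj ha hb
      rw [← hGC a, ← hGC b, hab]
    refine ⟨G '' Set.Icc 0 1, ?_, ?_, ?_⟩
    · intro hcount
      have : (Set.Icc (0:ℝ) 1).Countable :=
        ((Set.mapsTo_image G _).countable_of_injOn hGinj) hcount
      have h2 := Cardinal.le_aleph0_iff_set_countable.2 this
      rw [Cardinal.mk_Icc_real one_pos] at h2
      exact absurd h2 (not_le.2 Cardinal.aleph0_lt_continuum)
    · rintro γ ⟨l, hl, rfl⟩
      exact hGgeo l hl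
    · rintro γ ⟨a, ha, rfl⟩ σ ⟨b, hb, rfl⟩ hne w z hwz
      have hago := hGgeo a ha
      have hbgo := hGgeo b hb
      have hab : a ≠ b := fun h => hne (by rw [h])
      -- w = z as reals
      have hwu : ‖G a w - u‖ = (w:ℝ) * d := by
        have := hago.2.2 w 0
        rw [hago.1, dist_eq_norm, dist_eq_norm] at this
        simpa [abs_of_nonneg w.2.1] using this
      have hzu : ‖G b z - u‖ = (z:ℝ) * d := by
        have := hbgo.2.2 z 0
        rw [hbgo.1, dist_eq_norm, dist_eq_norm] at this
        simpa [abs_of_nonneg z.2.1] using this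
      have hweq : (w:ℝ) = (z:ℝ) := by
        rw [hwz, hzu] at hwu
        exact (mul_right_cancel₀ (ne_of_gt hd) hwu).symm
      by_cases hw0 : (w:ℝ) = 0
      · left
        have : w = 0 := Subtype.ext hw0
        rw [this, hago.1]
      by_cases hw1 : (w:ℝ) = 1
      · right
        have : w = 1 := Subtype.ext hw1
        rw [this, hago.2.1]
      exfalso
      have hw0' : (0:ℝ) < w := lt_of_le_of_ne w.2.1 (Ne.symm hw0)
      have hw1' : (w:ℝ) < 1 := lt_of_le_of_ne w.2.2 hw1
      have hPab : P a ≠ P b := fun h => hab (hPinj ha hb h)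
      rcases le_or_gt (w:ℝ) C with hwC | hwC
      · have h1 : G a w = u + ((w:ℝ) / C) • (P a - u) := brokenPath_le hwC
        have h2 : G b z = u + ((w:ℝ) / C) • (P b - u) := by
          rw [hG]
          show brokenPath u v (P b) C (z:ℝ) = _
          rw [brokenPath_le (hweq ▸ hwC), ← hweq]
        rw [h1, h2, add_right_inj] at hwz
        have hne0 : (w:ℝ) / C ≠ 0 := div_ne_zero (ne_of_gt hw0') (ne_of_gt hC.1)
        have := smul_right_injective X hne0 hwz
        exact hPab (sub_left_inj.1 this)
      · have h1 : G a w = P a + (((w:ℝ) - C) / (1 - C)) • (v - P a) := brokenPath_gt hwC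
        have h2 : G b z = P b + (((w:ℝ) - C) / (1 - C)) • (v - P b) := by
          rw [hG]
          show brokenPath u v (P b) C (z:ℝ) = _
          rw [brokenPath_gt (hweq ▸ hwC), ← hweq]
        set c := ((w:ℝ) - C) / (1 - C) with hc
        have hcc : c < 1 := by
          rw [hc, div_lt_one (by linarith [hC.2])]
          linarith
        have : (1 - c) • (P a - P b) = 0 := by
          rw [h1, h2] at hwz
          have e : (1 - c) • (P a - P b)
              = (P a + c • (v - P a)) - (P b + c • (v - P b)) := by
            module
          rw [e, hwz, sub_self]
        rcases smul_eq_zero.1 this with h | h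
        · linarith [sub_eq_zero.1 (by exact_mod_cast h : (1:ℝ) - c = 0)]
        · exact hPab (sub_eq_zero.1 h)
  tfae_have 2 → 1 := by
    rintro ⟨S, hSc, hSgeo, _⟩
    have : ¬ S.Subsingleton := fun h => hSc h.countable
    rw [Set.not_subsingleton_iff] at this
    obtain ⟨γ, hγ, σ, hσ, hne⟩ := this
    exact ⟨γ, σ, hSgeo γ hγ, hSgeo σ hσ, hne⟩
  tfae_finish
end

section
/- Let (X, ‖·‖) be a real normed vector space. The following are equivalent: (1) X is multigeodesic; (2) between any two distinct points of X there is an uncountable family of pairwise-disjoint geodesics; (3) for every x ∈ X with ‖x‖ = 1 there exist C ∈ (0,1) and y ∈ X with y ≠ C·x such that ‖y‖ = C and ‖x − y‖ = 1 − C. -/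
/-- A metric space is multigeodesic if between any two distinct points there are
at least two distinct geodesics. -/
def Multigeodesic (X : Type*) [MetricSpace X] : Prop :=
  ∀ u v : X, u ≠ v → ∃ γ σ : unitInterval → X,
    IsGeodesic u v γ ∧ IsGeodesic u v σ ∧ γ ≠ σ

/-! ### Auxiliary material -/

/-- A 1-Lipschitz-type bound together with correct endpoints forces a geodesic. -/
lemma isGeodesic_of_short {X : Type*} [MetricSpace X] {u v : X}
    {γ : unitInterval → X} (h0 : γ 0 = u) (h1 : γ 1 = v)
    (hle : ∀ s t : unitInterval, (s : ℝ) ≤ t →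
      dist (γ s) (γ t) ≤ ((t : ℝ) - s) * dist u v) :
    IsGeodesic u v γ := by
  refine ⟨h0, h1, ?_⟩
  have main : ∀ s t : unitInterval, (s : ℝ) ≤ t →
      dist (γ s) (γ t) = ((t : ℝ) - s) * dist u v := by
    intro s t hst
    refine le_antisymm (hle s t hst) ?_
    have hA : dist u (γ s) ≤ (s : ℝ) * dist u v := by
      have := hle 0 s s.2.1
      simpa [h0, dist_comm] using this
    have hB : dist (γ t) v ≤ (1 - (t : ℝ)) * dist u v := by
      have := hle t 1 t.2.2
      simpa [h1] using this
    have h3 : dist u v ≤ dist u (γ s) + dist (γ s) (γ t) + dist (γ t) v :=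
      dist_triangle4 u (γ s) (γ t) v
    nlinarith [dist_nonneg (x := u) (y := v)]
  intro s t
  rcases le_total (s : ℝ) (t : ℝ) with h | h
  · rw [main s t h, abs_of_nonpos (by linarith)]; ring
  · rw [dist_comm, main t s h, abs_of_nonneg (by linarith)]

/-- The piecewise-linear "bump" used to deform the straight-line geodesic. -/
noncomputable def geoBump (C t : ℝ) : ℝ := if t ≤ C then t / C else (1 - t) / (1 - C)

lemma geoBump_of_le {C t : ℝ} (h : t ≤ C) : geoBump C t = t / C := if_pos h

lemma geoBump_of_ge {C t : ℝ} (hC : C ∈ Set.Ioo (0 : ℝ) 1) (h : C ≤ t) :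
    geoBump C t = (1 - t) / (1 - C) := by
  rcases eq_or_lt_of_le h with rfl | h'
  · rw [geoBump, if_pos le_rfl, div_self hC.1.ne']
    rw [eq_comm, div_eq_one_iff_eq (by linarith [hC.2])]
  · exact if_neg (not_le.mpr h')

lemma geoBump_zero_left {C : ℝ} (hC : C ∈ Set.Ioo (0 : ℝ) 1) : geoBump C 0 = 0 := by
  rw [geoBump_of_le hC.1.le, zero_div]

lemma geoBump_zero_right {C : ℝ} (hC : C ∈ Set.Ioo (0 : ℝ) 1) : geoBump C 1 = 0 := by
  rw [geoBump_of_ge hC hC.2.le, sub_self, zero_div]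

lemma geoBump_self {C : ℝ} (hC : C ∈ Set.Ioo (0 : ℝ) 1) : geoBump C C = 1 := by
  rw [geoBump_of_le le_rfl, div_self hC.1.ne']

lemma geoBump_eq_zero {C t : ℝ} (hC : C ∈ Set.Ioo (0 : ℝ) 1) (ht0 : 0 ≤ t) (ht1 : t ≤ 1)
    (h : geoBump C t = 0) : t = 0 ∨ t = 1 := by
  rcases le_or_gt t C with h' | h'
  · left
    rw [geoBump_of_le h', div_eq_zero_iff] at h
    rcases h with h | h
    · exact h
    · exact absurd h hC.1.ne'
  · right
    rw [geoBump_of_ge hC h'.le, div_eq_zero_iff] at h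
    rcases h with h | h
    · linarith
    · exact absurd h (by intro hh; linarith [hC.2] : 1 - C ≠ 0)

/-- Key norm estimate for the broken-line path through `p`. -/
lemma brokenF_short {X : Type*} [NormedAddCommGroup X] [NormedSpace ℝ X]
    {e p : X} {C d : ℝ} (hC : C ∈ Set.Ioo (0 : ℝ) 1)
    (hpn : ‖p‖ = C * d) (hepn : ‖e - p‖ = (1 - C) * d)
    {s t : ℝ} (hs : 0 ≤ s) (hst : s ≤ t) (ht : t ≤ 1) :
    ‖(t • e + geoBump C t • (p - C • e)) - (s • e + geoBump C s • (p - C • e))‖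
      ≤ (t - s) * d := by
  have hC0 : (0:ℝ) < C := hC.1
  have hC0' : C ≠ 0 := hC0.ne'
  have hC1 : C < 1 := hC.2
  have hC1' : (1:ℝ) - C ≠ 0 := by intro h; linarith
  set F : ℝ → X := fun a => a • e + geoBump C a • (p - C • e) with hF
  have nlow : ∀ a b : ℝ, a ≤ b → b ≤ C → ‖F b - F a‖ = (b - a) * d := by
    intro a b hab hbC
    have hlow : F b - F a = ((b - a) / C) • p := by
      rw [hF]
      simp only
      rw [geoBump_of_le hbC, geoBump_of_le (hab.trans hbC)]
      match_scalars <;> field_simp <;> ring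
    rw [hlow, norm_smul, Real.norm_eq_abs,
      abs_of_nonneg (div_nonneg (by linarith) hC0.le), hpn]
    field_simp
  have nhigh : ∀ a b : ℝ, C ≤ a → a ≤ b → ‖F b - F a‖ = (b - a) * d := by
    intro a b hCa hab
    have hhigh : F b - F a = ((b - a) / (1 - C)) • (e - p) := by
      rw [hF]
      simp only
      rw [geoBump_of_ge hC (hCa.trans hab), geoBump_of_ge hC hCa]
      match_scalars <;> field_simp <;> ring
    rw [hhigh, norm_smul, Real.norm_eq_abs,
      abs_of_nonneg (div_nonneg (by linarith) (by linarith)), hepn]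
    field_simp
  rcases le_or_gt t C with h1 | h1
  · rw [nlow s t hst h1]
  · rcases le_or_gt C s with h2 | h2
    · rw [nhigh s t h2 hst]
    · calc ‖F t - F s‖ = ‖(F t - F C) + (F C - F s)‖ := by congr 1; abel
        _ ≤ ‖F t - F C‖ + ‖F C - F s‖ := norm_add_le _ _
        _ = (t - C) * d + (C - s) * d := by
            rw [nhigh C t le_rfl h1.le, nlow s C h2.le le_rfl]
        _ = (t - s) * d := by ring

theorem statement4 {X : Type*} [NormedAddCommGroup X] [NormedSpace ℝ X] :
    List.TFAE [
      -- (1) X is multigeodesic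
      Multigeodesic X,
      -- (2) between any two distinct points there is an uncountable family of
      -- pairwise-disjoint geodesics
      ∀ u v : X, u ≠ v → ∃ S : Set (unitInterval → X), ¬ S.Countable ∧
        (∀ γ ∈ S, IsGeodesic u v γ) ∧ S.Pairwise (DisjointGeodesics u v),
      -- (3) for every unit vector x there is an intermediate point other than C • x
      ∀ x : X, ‖x‖ = 1 → ∃ C ∈ Set.Ioo (0 : ℝ) 1, ∃ y : X, y ≠ C • x ∧
        ‖y‖ = C ∧ ‖x - y‖ = 1 - C] := by
  tfae_have h21 : 2 → 1
  · intro h2 u v huv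
    obtain ⟨S, hSc, hSg, -⟩ := h2 u v huv
    obtain ⟨γ, hγ, σ, hσ, hne⟩ :=
      Set.not_subsingleton_iff.mp (fun hs => hSc hs.countable)
    exact ⟨γ, σ, hSg γ hγ, hSg σ hσ, hne⟩
  tfae_have h13 : 1 → 3
  · intro h1 x hx
    have hx0 : (0 : X) ≠ x := by
      intro h
      rw [← h, norm_zero] at hx
      norm_num at hx
    obtain ⟨γ, σ, hγ, hσ, hne⟩ := h1 0 x hx0
    have hd : dist (0 : X) x = 1 := by simp [dist_eq_norm, norm_sub_rev, hx]
    obtain ⟨s, hs⟩ : ∃ s, γ s ≠ σ s := by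
      by_contra h
      push_neg at h
      exact hne (funext h)
    have hs0 : (0 : ℝ) < (s : ℝ) := by
      rcases eq_or_lt_of_le s.2.1 with h | h
      · exfalso
        have : s = 0 := Subtype.ext h.symm
        rw [this, hγ.1, hσ.1] at hs
        exact hs rfl
      · exact h
    have hs1 : (s : ℝ) < 1 := by
      rcases eq_or_lt_of_le s.2.2 with h | h
      · exfalso
        have : s = 1 := Subtype.ext h
        rw [this, hγ.2.1, hσ.2.1] at hs
        exact hs rfl
      · exact h
    have key : ∀ τ : unitInterval → X, IsGeodesic 0 x τ →
        ‖τ s‖ = (s : ℝ) ∧ ‖x - τ s‖ = 1 - (s : ℝ) := by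
      intro τ hτ
      constructor
      · have h := hτ.2.2 s 0
        rw [hτ.1, hd, mul_one] at h
        simpa [abs_of_nonneg s.2.1] using h
      · have h := hτ.2.2 1 s
        rw [hτ.2.1, hd, mul_one] at h
        rw [dist_eq_norm] at h
        rw [h]
        simp [abs_of_nonneg (by linarith : (0:ℝ) ≤ 1 - (s : ℝ))]
    refine ⟨(s : ℝ), ⟨hs0, hs1⟩, ?_⟩
    by_cases hcase : γ s = (s : ℝ) • x
    · exact ⟨σ s, fun h => hs (by rw [hcase, h]), (key σ hσ).1, (key σ hσ).2⟩
    · exact ⟨γ s, hcase, (key γ hγ).1, (key γ hγ).2⟩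
  tfae_have h32 : 3 → 2
  · intro h3 u v huv
    set e : X := v - u with he
    have he0 : e ≠ 0 := sub_ne_zero.mpr (Ne.symm huv)
    set d : ℝ := ‖e‖ with hdd
    have hd0 : (0:ℝ) < d := norm_pos_iff.mpr he0
    have hxnorm : ‖d⁻¹ • e‖ = 1 := by
      rw [norm_smul, Real.norm_eq_abs, abs_of_pos (inv_pos.mpr hd0), ← hdd,
        inv_mul_cancel₀ hd0.ne']
    obtain ⟨C, hC, y, hy, hyn, hxy⟩ := h3 (d⁻¹ • e) hxnorm
    have hC0 : (0:ℝ) < C := hC.1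
    have hC1 : C < 1 := hC.2
    set p : X := d • y with hp
    have hdx : d • (d⁻¹ • e) = e := by rw [smul_smul, mul_inv_cancel₀ hd0.ne', one_smul]
    have hpn : ‖p‖ = C * d := by
      rw [hp, norm_smul, Real.norm_eq_abs, abs_of_pos hd0, hyn]; ring
    have hepn : ‖e - p‖ = (1 - C) * d := by
      have h' : e - p = d • (d⁻¹ • e - y) := by rw [smul_sub, hdx, hp]
      rw [h', norm_smul, Real.norm_eq_abs, abs_of_pos hd0, hxy]; ring
    have hpe : p ≠ C • e := by
      intro h
      apply hy
      have hyp : y = d⁻¹ • p := by rw [hp, smul_smul, inv_mul_cancel₀ hd0.ne', one_smul]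
      rw [hyp, h, smul_comm]
    set q : X := p - C • e with hq
    have hq0 : q ≠ 0 := sub_ne_zero.mpr hpe
    -- linear independence of e and q
    have hindep : ∀ a b : ℝ, a • e + b • q = 0 → a = 0 ∧ b = 0 := by
      intro a b hab
      have hb : b = 0 := by
        by_contra hb
        have hqe : q = (-(a / b)) • e := by
          have h1 : b • q = (-a) • e := by
            have h1' : b • q = -(a • e) := by
              rw [eq_neg_iff_add_eq_zero, add_comm]; exact hab
            rw [h1', ← neg_smul]
          calc q = b⁻¹ • (b • q) := by rw [smul_smul, inv_mul_cancel₀ hb, one_smul]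
            _ = b⁻¹ • ((-a) • e) := by rw [h1]
            _ = (-(a / b)) • e := by rw [smul_smul]; congr 1; field_simp
        have hpval : p = (C - a / b) • e := by
          have h2 : p = q + C • e := by rw [hq]; abel
          rw [h2, hqe, ← add_smul]
          congr 1
          ring
        have hnp : |C - a / b| * d = C * d := by
          have h3' := hpn
          rw [hpval, norm_smul, Real.norm_eq_abs, ← hdd] at h3'
          exact h3'
        have habs : |C - a / b| = C := mul_right_cancel₀ hd0.ne' hnp
        rcases (abs_eq hC0.le).mp habs with h' | h'
        · apply hq0
          have h4 : a / b = 0 := by linarith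
          rw [hqe, h4, neg_zero, zero_smul]
        · rw [h'] at hpval
          have hcontra : ‖e - p‖ = (1 + C) * d := by
            rw [hpval]
            have h4 : e - (-C) • e = (1 + C) • e := by module
            rw [h4, norm_smul, Real.norm_eq_abs, abs_of_pos (by linarith), ← hdd]
          rw [hepn] at hcontra
          nlinarith
      refine ⟨?_, hb⟩
      rw [hb, zero_smul, add_zero] at hab
      rcases smul_eq_zero.mp hab with h | h
      · exact h
      · exact absurd h he0
    -- the family of geodesics
    set Γ : ℝ → unitInterval → X :=
      fun r t => u + ((1 - r) * (t : ℝ)) • e + r • ((t : ℝ) • e + geoBump C (t : ℝ) • q)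
      with hΓ
    have hΓalt : ∀ (r : ℝ) (t : unitInterval),
        Γ r t = u + (t : ℝ) • e + (r * geoBump C (t : ℝ)) • q := by
      intro r t
      simp only [hΓ]
      module
    have hc0 : ((0 : unitInterval) : ℝ) = 0 := rfl
    have hc1 : ((1 : unitInterval) : ℝ) = 1 := rfl
    have hΓ0 : ∀ r : ℝ, Γ r 0 = u := by
      intro r
      rw [hΓalt, hc0, geoBump_zero_left hC, mul_zero, zero_smul, zero_smul,
        add_zero, add_zero]
    have hΓ1 : ∀ r : ℝ, Γ r 1 = v := by
      intro r
      rw [hΓalt, hc1, geoBump_zero_right hC, mul_zero, zero_smul, one_smul,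
        add_zero, he]
      abel
    have hduv : dist u v = d := by rw [dist_eq_norm, hdd, he, norm_sub_rev]
    have hgeo : ∀ r ∈ Set.Ioc (0:ℝ) 1, IsGeodesic u v (Γ r) := by
      intro r hr
      apply isGeodesic_of_short (hΓ0 r) (hΓ1 r)
      intro s t hst
      rw [hduv, dist_eq_norm']
      have hb := brokenF_short (e := e) (p := p) hC hpn hepn s.2.1 hst t.2.2
      set D : X := ((t:ℝ) • e + geoBump C (t:ℝ) • (p - C • e))
        - ((s:ℝ) • e + geoBump C (s:ℝ) • (p - C • e)) with hD
      have hsub : Γ r t - Γ r s = ((1 - r) * ((t:ℝ) - (s:ℝ))) • e + r • D := by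
        rw [hD, hΓ]
        simp only
        module
      rw [hsub]
      have hr0 : 0 ≤ r := hr.1.le
      have hr1 : 0 ≤ 1 - r := by linarith [hr.2]
      have hts : 0 ≤ (t:ℝ) - (s:ℝ) := by linarith
      calc ‖((1 - r) * ((t:ℝ) - (s:ℝ))) • e + r • D‖
          ≤ ‖((1 - r) * ((t:ℝ) - (s:ℝ))) • e‖ + ‖r • D‖ := norm_add_le _ _
        _ = (1 - r) * ((t:ℝ) - (s:ℝ)) * d + r * ‖D‖ := by
            rw [norm_smul, norm_smul, Real.norm_eq_abs, Real.norm_eq_abs,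
              abs_of_nonneg (mul_nonneg hr1 hts), abs_of_nonneg hr0, ← hdd]
        _ ≤ (1 - r) * ((t:ℝ) - (s:ℝ)) * d + r * (((t:ℝ) - (s:ℝ)) * d) := by
            have := mul_le_mul_of_nonneg_left hb hr0
            linarith
        _ = ((t:ℝ) - (s:ℝ)) * d := by ring
    -- pairwise disjointness
    have hdisj : ∀ r ∈ Set.Ioc (0:ℝ) 1, ∀ r' ∈ Set.Ioc (0:ℝ) 1, r ≠ r' →
        DisjointGeodesics u v (Γ r) (Γ r') := by
      intro r hr r' hr' hrr w z hwz
      rw [hΓalt, hΓalt] at hwz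
      have hzero : ((w:ℝ) - (z:ℝ)) • e
          + (r * geoBump C (w:ℝ) - r' * geoBump C (z:ℝ)) • q = 0 := by
        have h5 : (u + (w:ℝ) • e + (r * geoBump C (w:ℝ)) • q)
            - (u + (z:ℝ) • e + (r' * geoBump C (z:ℝ)) • q)
            = ((w:ℝ) - (z:ℝ)) • e
              + (r * geoBump C (w:ℝ) - r' * geoBump C (z:ℝ)) • q := by module
        rw [hwz, sub_self] at h5
        exact h5.symm
      obtain ⟨hab1, hab2⟩ := hindep _ _ hzero
      have hwzc : (w:ℝ) = (z:ℝ) := by linarith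
      rw [← hwzc] at hab2
      have h6 : (r - r') * geoBump C (w:ℝ) = 0 := by
        rw [sub_mul]; linarith
      rcases mul_eq_zero.mp h6 with h7 | h7
      · exact absurd (by linarith : r = r') hrr
      · rcases geoBump_eq_zero hC w.2.1 w.2.2 h7 with h8 | h8
        · left
          have hw : w = 0 := Subtype.ext h8
          rw [hw, hΓ0]
        · right
          have hw : w = 1 := Subtype.ext h8
          rw [hw, hΓ1]
    -- injectivity
    have hinj : Set.InjOn Γ (Set.Ioc (0:ℝ) 1) := by
      intro r _ r' _ h
      have h5 : (u + C • e + (r * geoBump C C) • q)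
          - (u + C • e + (r' * geoBump C C) • q) = ((r - r') * geoBump C C) • q := by
        module
      have hcoe : ((⟨C, hC0.le, hC1.le⟩ : unitInterval) : ℝ) = C := rfl
      have h6 := congrFun h (⟨C, hC0.le, hC1.le⟩ : unitInterval)
      rw [hΓalt, hΓalt, hcoe] at h6
      rw [h6, sub_self] at h5
      rw [geoBump_self hC, mul_one] at h5
      rcases smul_eq_zero.mp h5.symm with h7 | h7
      · linarith [sub_eq_zero.mp h7]
      · exact absurd h7 hq0
    refine ⟨Γ '' Set.Ioc 0 1, ?_, ?_, ?_⟩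
    · intro hcount
      have h8 := (Set.countable_of_injective_of_countable_image hinj hcount).le_aleph0
      rw [Cardinal.mk_Ioc_real zero_lt_one] at h8
      exact absurd h8 (not_le.mpr Cardinal.aleph0_lt_continuum)
    · rintro γ ⟨r, hr, rfl⟩
      exact hgeo r hr
    · rintro γ ⟨r, hr, rfl⟩ σ ⟨r', hr', rfl⟩ hne
      exact hdisj r hr r' hr' (fun h => hne (by rw [h]))
  tfae_finish
end

section
/- For any two distinct continuous functions u, v : [0,1] → ℝ, there exist C ∈ (0,1) and distinct continuous functions x, y : [0,1] → ℝ such that ∫₀¹ |x(t) − u(t)| dt = ∫₀¹ |y(t) − u(t)| dt = C·∫₀¹ |u(t) − v(t)| dt and ∫₀¹ |v(t) − x(t)| dt = ∫₀¹ |v(t) − y(t)| dt = (1 − C)·∫₀¹ |u(t) − v(t)| dt. (This is the condition which, by the characterisation of multigeodesic normed spaces, shows that the space C([0,1]) of continuous real-valued functions on [0,1] with the norm ‖f‖₁ = ∫₀¹ |f(t)| dt is multigeodesic.) -/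
open MeasureTheory

lemma aux_int (f : unitInterval → ℝ) (hf : Continuous f) : Integrable f :=
  hf.integrable_of_hasCompactSupport (isClosed_tsupport f).isCompact

lemma aux_open_pos {U : Set unitInterval} (hU : IsOpen U) (hne : U.Nonempty) :
    0 < volume U := by
  obtain ⟨V, hV, rfl⟩ := isOpen_induced_iff.mp hU
  rw [unitInterval.volume_def,
    (MeasurableEmbedding.subtype_coe measurableSet_Icc).comap_apply,
    Subtype.image_preimage_coe]
  obtain ⟨t, htV⟩ := hne
  have hne2 : (V ∩ Set.Ioo (0:ℝ) 1).Nonempty := by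
    have ht : (t:ℝ) ∈ closure (Set.Ioo (0:ℝ) 1) := by
      rw [closure_Ioo one_ne_zero.symm]; exact t.2
    exact mem_closure_iff.mp ht V hV htV
  calc (0:ENNReal) < volume (V ∩ Set.Ioo (0:ℝ) 1) :=
        (hV.inter isOpen_Ioo).measure_pos _ hne2
    _ ≤ volume (Set.Icc (0:ℝ) 1 ∩ V) :=
        measure_mono fun x hx => ⟨Set.Ioo_subset_Icc_self hx.2, hx.1⟩

theorem statement6 (u v : C(unitInterval, ℝ)) (huv : u ≠ v) :
    ∃ C ∈ Set.Ioo (0 : ℝ) 1, ∃ x y : C(unitInterval, ℝ), x ≠ y ∧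
      (∫ t : unitInterval, |x t - u t|) = C * ∫ t : unitInterval, |u t - v t| ∧
      (∫ t : unitInterval, |y t - u t|) = C * ∫ t : unitInterval, |u t - v t| ∧
      (∫ t : unitInterval, |v t - x t|) = (1 - C) * ∫ t : unitInterval, |u t - v t| ∧
      (∫ t : unitInterval, |v t - y t|) = (1 - C) * ∫ t : unitInterval, |u t - v t| := by
  classical
  set w : unitInterval → ℝ := fun t => v t - u t with hw
  have hwcont : Continuous w := (map_continuous v).sub (map_continuous u)
  have hwabs : Continuous fun t => |w t| := hwcont.abs
  have hwint : Integrable fun t => |w t| := aux_int _ hwabs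
  set S : ℝ := ∫ t : unitInterval, |w t| with hSdef
  have hwne : ∃ t, w t ≠ 0 := by
    by_contra h
    push_neg at h
    exact huv (ContinuousMap.ext fun t => by have := h t; simp [hw] at this; linarith)
  have hS : 0 < S := by
    rw [hSdef, integral_pos_iff_support_of_nonneg (fun t => abs_nonneg _) hwint]
    apply aux_open_pos
    · have : Function.support (fun t => |w t|) = (fun t => |w t|) ⁻¹' ({0}ᶜ) := by
        ext t; simp [Function.support]
      rw [this]
      exact isOpen_compl_singleton.preimage hwabs
    · obtain ⟨t, ht⟩ := hwne
      exact ⟨t, by simp [Function.support, ht]⟩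
  have hT : (∫ t : unitInterval, |u t - v t|) = S := by
    rw [hSdef]; congr 1; funext t; rw [abs_sub_comm]
  -- the family
  set g : ℝ → unitInterval → ℝ := fun a t => min 1 (max 0 (a - t)) with hg
  have hg_nonneg : ∀ a t, 0 ≤ g a t := fun a t => le_min one_pos.le (le_max_left _ _)
  have hg_le_one : ∀ a t, g a t ≤ 1 := fun a t => min_le_left _ _
  have hg_cont_t : ∀ a, Continuous (g a) := fun a =>
    continuous_const.min (continuous_const.max (continuous_const.sub continuous_subtype_val))
  set G : ℝ → ℝ := fun a => ∫ t : unitInterval, g a t * |w t| with hG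
  have hGcont : Continuous G := by
    apply continuous_of_dominated (bound := fun t => |w t|)
    · exact fun a => ((hg_cont_t a).mul hwabs).aestronglyMeasurable
    · intro a
      filter_upwards with t
      rw [Real.norm_eq_abs, abs_mul, abs_of_nonneg (hg_nonneg a t), abs_abs]
      calc g a t * |w t| ≤ 1 * |w t| := by
            apply mul_le_mul_of_nonneg_right (hg_le_one a t) (abs_nonneg _)
        _ = |w t| := one_mul _
    · exact hwint
    · filter_upwards with t
      exact (continuous_const.min (continuous_const.max
        ((continuous_id.sub continuous_const)))).mul continuous_const
  have hG0 : G 0 = 0 := by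
    have hz : ∀ t : unitInterval, g 0 t * |w t| = 0 := by
      intro t
      have h1 : (0:ℝ) ⊔ (0 - (t:ℝ)) = 0 := sup_eq_left.mpr (by linarith [t.2.1])
      have h2 : g 0 t = 0 := by
        show (1:ℝ) ⊓ ((0:ℝ) ⊔ ((0:ℝ) - (t:ℝ))) = 0
        rw [h1]
        exact inf_eq_right.mpr zero_le_one
      rw [h2, zero_mul]
    show (∫ t : unitInterval, g 0 t * |w t|) = 0
    simp only [hz]
    exact integral_zero _ _
  have hG2 : G 2 = S := by
    show (∫ t : unitInterval, g 2 t * |w t|) = S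
    rw [hSdef]
    congr 1
    funext t
    have h1 : max 0 (2 - (t:ℝ)) = 2 - t := max_eq_right (by linarith [t.2.2])
    have h2 : min 1 (2 - (t:ℝ)) = 1 := min_eq_left (by linarith [t.2.2])
    simp [hg, h1, h2]
  have hmem : S / 2 ∈ G '' Set.Icc 0 2 := by
    apply intermediate_value_Icc (by norm_num : (0:ℝ) ≤ 2) hGcont.continuousOn
    constructor
    · rw [hG0]; linarith
    · rw [hG2]; linarith
  obtain ⟨a, -, hGa⟩ := hmem
  -- the two functions
  set x : C(unitInterval, ℝ) := ContinuousMap.mk (fun t => (u t + v t) / 2)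
    (((map_continuous u).add (map_continuous v)).div_const 2) with hx
  set y : C(unitInterval, ℝ) := ContinuousMap.mk (fun t => u t + g a t * w t)
    ((map_continuous u).add ((hg_cont_t a).mul hwcont)) with hy
  have hxu : ∀ t, x t - u t = w t / 2 := fun t => by simp [hx, hw]; ring
  have hvx : ∀ t, v t - x t = w t / 2 := fun t => by simp [hx, hw]; ring
  have hyu : ∀ t, y t - u t = g a t * w t := fun t => by simp [hy]
  have hvy : ∀ t, v t - y t = (1 - g a t) * w t := fun t => by simp [hy, hw]; ring
  refine ⟨1/2, by norm_num, x, y, ?_, ?_, ?_, ?_, ?_⟩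
  · -- x ≠ y
    intro hxy
    have hkey : ∀ t : unitInterval, (t:ℝ) ≠ a - 1/2 → w t = 0 := by
      intro t ht
      have h0 := congrFun (congrArg DFunLike.coe hxy) t
      simp only [hx, hy, ContinuousMap.coe_mk] at h0
      have heq : (1/2 : ℝ) * w t = g a t * w t := by
        simp only [hw] at h0 ⊢
        linarith [h0]
      have hgne : g a t ≠ 1/2 := by
        intro hgeq
        apply ht
        have h1 : max 0 (a - (t:ℝ)) = 1/2 := by
          rcases min_eq_iff.mp hgeq with h | h
          · norm_num at h
          · exact h.1
        rcases max_eq_iff.mp h1 with h | h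
        · norm_num at h
        · linarith [h.1]
      by_contra hwt
      exact hgne ((mul_right_cancel₀ hwt (by linarith : g a t * w t = 1/2 * w t)))
    obtain ⟨t1, ht1⟩ := hwne
    by_cases hex : ∃ t0 : unitInterval, (t0:ℝ) = a - 1/2
    · obtain ⟨t0, ht0⟩ := hex
      have heqon : Set.EqOn w (fun _ => 0) {t0}ᶜ := by
        intro t ht
        exact hkey t fun hc => ht (Subtype.ext (by rw [hc, ht0]))
      have : w = fun _ => 0 :=
        Continuous.ext_on (dense_compl_singleton t0) hwcont continuous_const heqon
      exact ht1 (congrFun this t1)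
    · push_neg at hex
      exact ht1 (hkey t1 (hex t1))
  · -- ∫ |x - u| = 1/2 * ∫|u - v|
    rw [hT]
    have : ∀ t : unitInterval, |x t - u t| = (1/2) * |w t| := by
      intro t; rw [hxu t, abs_div]; norm_num; ring
    simp only [this]
    rw [integral_const_mul]
  · -- ∫ |y - u|
    rw [hT]
    have : ∀ t : unitInterval, |y t - u t| = g a t * |w t| := by
      intro t; rw [hyu t, abs_mul, abs_of_nonneg (hg_nonneg a t)]
    simp only [this]
    rw [show (∫ t : unitInterval, g a t * |w t|) = G a from rfl, hGa]; ring
  · -- ∫ |v - x|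
    rw [hT]
    have : ∀ t : unitInterval, |v t - x t| = (1/2) * |w t| := by
      intro t; rw [hvx t, abs_div]; norm_num; ring
    simp only [this]
    rw [integral_const_mul]; ring
  · -- ∫ |v - y|
    rw [hT]
    have hpt : ∀ t : unitInterval, |v t - y t| = |w t| - g a t * |w t| := by
      intro t
      rw [hvy t, abs_mul, abs_of_nonneg (by linarith [hg_le_one a t] : (0:ℝ) ≤ 1 - g a t)]
      ring
    simp only [hpt]
    rw [integral_sub hwint (aux_int (fun t => g a t * |w t|) ((hg_cont_t a).mul hwabs)), ← hSdef,
      show (∫ t : unitInterval, g a t * |w t|) = G a from rfl, hGa]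
    ring
end

section
/- Let (X, ‖·‖) be a nontrivial finite-dimensional real normed vector space. Then X is not multigeodesic; that is, there exist distinct u, v ∈ X between which there is exactly one geodesic. -/
theorem statement7 {X : Type*} [NormedAddCommGroup X] [NormedSpace ℝ X]
    [Nontrivial X] [FiniteDimensional ℝ X] :
    ¬ Multigeodesic X ∧
      ∃ u v : X, u ≠ v ∧ ∃! γ : unitInterval → X, IsGeodesic u v γ := by
  -- get an extreme point of the closed unit ball
  obtain ⟨w, hwmem, hwext⟩ :=
    (ProperSpace.isCompact_closedBall (0 : X) 1).extremePoints_nonempty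
      ⟨0, Metric.mem_closedBall_self zero_le_one⟩
  rw [Metric.mem_closedBall, dist_zero_right] at hwmem
  -- the extreme point has norm 1
  have hw1 : ‖w‖ = 1 := by
    by_contra h
    have hwlt : ‖w‖ < 1 := lt_of_le_of_ne hwmem h
    obtain ⟨z, hz⟩ := exists_ne (0 : X)
    set ε : ℝ := (1 - ‖w‖) / ‖z‖ with hε
    have hzpos : 0 < ‖z‖ := norm_pos_iff.2 hz
    have hεpos : 0 < ε := div_pos (by linarith) hzpos
    have hnorm : ‖ε • z‖ = 1 - ‖w‖ := by
      rw [norm_smul, Real.norm_of_nonneg hεpos.le, hε, div_mul_cancel₀ _ hzpos.ne']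
    have hmem₁ : w + ε • z ∈ Metric.closedBall (0 : X) 1 := by
      rw [Metric.mem_closedBall, dist_zero_right]
      calc ‖w + ε • z‖ ≤ ‖w‖ + ‖ε • z‖ := norm_add_le _ _
        _ = 1 := by rw [hnorm]; ring
    have hmem₂ : w - ε • z ∈ Metric.closedBall (0 : X) 1 := by
      rw [Metric.mem_closedBall, dist_zero_right]
      calc ‖w - ε • z‖ ≤ ‖w‖ + ‖ε • z‖ := norm_sub_le _ _
        _ = 1 := by rw [hnorm]; ring
    have hseg : w ∈ openSegment ℝ (w + ε • z) (w - ε • z) := by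
      refine ⟨1/2, 1/2, by norm_num, by norm_num, by norm_num, ?_⟩
      rw [smul_add, smul_sub, ← add_sub_assoc]
      module
    have heq := (hwext hmem₁ hmem₂ hseg)
    have hz0 : ε • z = 0 := by
      have := congrArg (· - w) heq
      simpa using this
    rcases smul_eq_zero.1 hz0 with h' | h'
    · exact hεpos.ne' h'
    · exact hz h'
  have hwne : w ≠ 0 := by intro h; rw [h, norm_zero] at hw1; norm_num at hw1
  have hdist : dist (0 : X) w = 1 := by rw [dist_comm, dist_zero_right, hw1]
  -- the straight-line geodesic
  set γ₀ : unitInterval → X := fun t => (t : ℝ) • w with hγ₀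
  have hgeo : IsGeodesic (0 : X) w γ₀ := by
    refine ⟨by simp [hγ₀], by simp [hγ₀], fun s t => ?_⟩
    rw [hdist, mul_one, hγ₀]
    simp only [dist_eq_norm, ← sub_smul, norm_smul, Real.norm_eq_abs, hw1, mul_one]
  -- uniqueness
  have huniq : ∀ γ : unitInterval → X, IsGeodesic (0 : X) w γ → γ = γ₀ := by
    intro γ ⟨h0, h1, hd⟩
    funext t
    have hnt : ‖γ t‖ = (t : ℝ) := by
      have := hd t 0
      rw [h0, dist_zero_right, hdist, mul_one] at this
      rw [abs_of_nonneg (by simpa using t.2.1)] at this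
      simpa using this
    have hnt' : ‖w - γ t‖ = 1 - (t : ℝ) := by
      have := hd 1 t
      rw [h1, hdist, mul_one, dist_eq_norm] at this
      rw [this, show ((1 : unitInterval) : ℝ) = 1 from rfl,
        abs_of_nonneg (by linarith [t.2.2])]
    rcases eq_or_lt_of_le t.2.1 with ht0 | ht0
    · have : (t : ℝ) = 0 := ht0.symm
      have htz : t = 0 := Subtype.ext this
      rw [htz, h0, hγ₀]; simp
    rcases eq_or_lt_of_le t.2.2 with ht1 | ht1
    · have htz : t = 1 := Subtype.ext ht1
      rw [htz, h1, hγ₀]; simp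
    -- 0 < t < 1
    set x : X := ((t : ℝ))⁻¹ • γ t with hx
    set y : X := (1 - (t : ℝ))⁻¹ • (w - γ t) with hy
    have hxmem : x ∈ Metric.closedBall (0 : X) 1 := by
      rw [Metric.mem_closedBall, dist_zero_right, hx, norm_smul, hnt,
        Real.norm_eq_abs, abs_of_pos (inv_pos.2 ht0), inv_mul_cancel₀ ht0.ne']
    have hymem : y ∈ Metric.closedBall (0 : X) 1 := by
      rw [Metric.mem_closedBall, dist_zero_right, hy, norm_smul, hnt',
        Real.norm_eq_abs, abs_of_pos (inv_pos.2 (by linarith)),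
        inv_mul_cancel₀ (by linarith)]
    have hseg : w ∈ openSegment ℝ x y := by
      refine ⟨(t : ℝ), 1 - (t : ℝ), ht0, by linarith, by ring, ?_⟩
      rw [hx, hy, smul_smul, smul_smul, mul_inv_cancel₀ ht0.ne',
        mul_inv_cancel₀ (by linarith : (1 : ℝ) - (t : ℝ) ≠ 0), one_smul, one_smul]
      abel
    have hxw : x = w := (hwext hxmem hymem hseg)
    have : γ t = (t : ℝ) • w := by
      rw [← hxw, hx, smul_smul, mul_inv_cancel₀ ht0.ne', one_smul]
    rw [this, hγ₀]
  refine ⟨?_, 0, w, Ne.symm hwne, γ₀, hgeo, huniq⟩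
  intro hmg
  obtain ⟨γ, σ, hγ, hσ, hne⟩ := hmg 0 w (Ne.symm hwne)
  exact hne ((huniq γ hγ).trans (huniq σ hσ).symm)
end

section
/- Let n ∈ ℕ, let ‖·‖ be a norm on ℝⁿ, and let ‖·‖₂ denote the Euclidean norm. Suppose x ∈ ℝⁿ satisfies ‖x‖ = 1 and ‖y‖₂ ≤ ‖x‖₂ for all y ∈ ℝⁿ with ‖y‖ ≤ 1. Then for every C ∈ (0,1), if y ∈ ℝⁿ satisfies ‖y‖ = C and ‖y − x‖ = 1 − C, then y = C·x. -/
theorem statement8 (n : ℕ) (N : EuclideanSpace ℝ (Fin n) → ℝ)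
    (N_add : ∀ a b, N (a + b) ≤ N a + N b)
    (N_smul : ∀ (c : ℝ) a, N (c • a) = |c| * N a)
    (N_def : ∀ a, N a = 0 → a = 0)
    (x : EuclideanSpace ℝ (Fin n)) (hx : N x = 1)
    (hmax : ∀ y, N y ≤ 1 → ‖y‖ ≤ ‖x‖)
    (C : ℝ) (hC : C ∈ Set.Ioo (0 : ℝ) 1)
    (y : EuclideanSpace ℝ (Fin n)) (hy : N y = C) (hyx : N (y - x) = 1 - C) :
    y = C • x := by
  obtain ⟨hC0, hC1⟩ := hC
  have hC0' : C ≠ 0 := ne_of_gt hC0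
  have h1C : (0:ℝ) < 1 - C := by linarith
  have h1C' : (1:ℝ) - C ≠ 0 := ne_of_gt h1C
  set z := C⁻¹ • y with hz
  set w := (1 - C)⁻¹ • (x - y) with hw
  have hNz : N z = 1 := by
    rw [hz, N_smul, hy, abs_of_pos (inv_pos.mpr hC0), inv_mul_cancel₀ hC0']
  have hNxy : N (x - y) = 1 - C := by
    have : x - y = (-1 : ℝ) • (y - x) := by module
    rw [this, N_smul, hyx]; norm_num
  have hNw : N w = 1 := by
    rw [hw, N_smul, hNxy, abs_of_pos (inv_pos.mpr h1C), inv_mul_cancel₀ h1C']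
  have hzn : ‖z‖ ≤ ‖x‖ := hmax z hNz.le
  have hwn : ‖w‖ ≤ ‖x‖ := hmax w hNw.le
  have hxzw : x = C • z + (1 - C) • w := by
    rw [hz, hw, smul_smul, smul_smul, mul_inv_cancel₀ hC0', mul_inv_cancel₀ h1C']
    module
  have hzw : z = w := by
    by_contra hne
    have := norm_combo_lt_of_ne hzn hwn hne hC0 h1C (by ring)
    rw [← hxzw] at this
    exact lt_irrefl _ this
  have hzx : z = x := by
    rw [hxzw, ← hzw]; module
  have : y = C • z := by
    rw [hz, smul_smul, mul_inv_cancel₀ hC0', one_smul]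
  rw [this, hzx]
end

section
/- Let n ∈ ℕ and let K ⊆ ℝⁿ be Lebesgue measurable with n-dimensional Lebesgue measure μ(K) = 1. Then the Lebesgue space L¹(K) (real-valued L¹ functions on K with respect to Lebesgue measure restricted to K, with the norm ‖f‖₁ = ∫_K |f| dμ) is a multigeodesic metric space. -/
open MeasureTheory

theorem statement9 (n : ℕ) (hn : 0 < n) (K : Set (Fin n → ℝ))
    (hK : MeasurableSet K) (hvol : volume K = 1) :
    Multigeodesic (Lp ℝ 1 (volume.restrict K)) := by
  set μ : Measure (Fin n → ℝ) := volume.restrict K with hμ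
  intro u v huv
  set w : Lp ℝ 1 μ := v - u with hwdef
  have hw0 : w ≠ 0 := sub_ne_zero.mpr (Ne.symm huv)
  have hwi : Integrable (⇑w) μ := L1.integrable_coeFn w
  set i0 : Fin n := ⟨0, hn⟩ with hi0
  set g : (Fin n → ℝ) → ℝ := fun x => (1 + (x i0)^2)⁻¹ with hgdef
  have hgpos : ∀ x, 0 < g x := by
    intro x; apply inv_pos.mpr; positivity
  have hg1 : ∀ x, g x ≤ 1 := by
    intro x
    show (1 + (x i0)^2)⁻¹ ≤ 1
    apply inv_le_one_of_one_le₀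
    nlinarith [sq_nonneg (x i0)]
  have hgb : ∀ x, ‖g x‖ ≤ 1 := by
    intro x; rw [Real.norm_eq_abs, abs_of_pos (hgpos x)]; exact hg1 x
  have hgm : AEStronglyMeasurable g μ := by
    exact ((continuous_const.add ((continuous_apply i0).pow 2)).inv₀
      (fun x => (by positivity : (1:ℝ) + x i0 ^ 2 ≠ 0))).aestronglyMeasurable
  have hgwi : Integrable (fun x => g x * w x) μ := hwi.bdd_mul hgm (ae_of_all _ hgb)
  have hgawi : Integrable (fun x => g x * |w x|) μ := hwi.abs.bdd_mul hgm (ae_of_all _ hgb)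
  set I : ℝ := ∫ x, |w x| ∂μ with hIdef
  have hInorm : ‖w‖ = I := by
    rw [L1.norm_eq_integral_norm]; simp [Real.norm_eq_abs, hIdef]
  have hIpos : 0 < I := by
    rw [← hInorm]; exact norm_pos_iff.mpr hw0
  set a : ℝ := (∫ x, g x * |w x| ∂μ) / I with hadef
  have ha0 : 0 ≤ a := by
    apply div_nonneg _ hIpos.le
    apply integral_nonneg
    intro x; exact mul_nonneg (hgpos x).le (abs_nonneg _)
  have ha1 : a ≤ 1 := by
    rw [hadef, div_le_one hIpos]
    apply integral_mono hgawi hwi.abs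
    intro x
    simpa using mul_le_of_le_one_left (abs_nonneg (w x)) (hg1 x)
  have hmean : ∫ x, (a - g x) * |w x| ∂μ = 0 := by
    have : ∀ x, (a - g x) * |w x| = a * |w x| - g x * |w x| := fun x => by ring
    simp_rw [this]
    rw [integral_sub (hwi.abs.const_mul a) hgawi, integral_const_mul, ← hIdef, hadef,
      div_mul_cancel₀ _ hIpos.ne']
    ring
  -- the perturbation P
  obtain ⟨P, hPcoe⟩ : ∃ P : Lp ℝ 1 μ, ⇑P =ᵐ[μ] fun x => (a - g x) * w x := by
    refine ⟨a • w - (memLp_one_iff_integrable.mpr hgwi).toLp _, ?_⟩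
    filter_upwards [Lp.coeFn_sub (a • w) ((memLp_one_iff_integrable.mpr hgwi).toLp _),
      Lp.coeFn_smul a w, (memLp_one_iff_integrable.mpr hgwi).coeFn_toLp] with x h1 h2 h3
    rw [h1, Pi.sub_apply, h2, h3]
    simp only [Pi.smul_apply, smul_eq_mul]
    ring
  clear_value w I a
  -- the key norm computation
  have hnorm : ∀ b k : ℝ, |k| ≤ 1/2 → ‖b • w + (b * k) • P‖ = |b| * I := by
    intro b k hk
    have hco : ⇑(b • w + (b * k) • P) =ᵐ[μ] fun x => (b * (1 + k * (a - g x))) * w x := by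
      filter_upwards [Lp.coeFn_add (b • w) ((b * k) • P), Lp.coeFn_smul b w,
        Lp.coeFn_smul (b * k) P, hPcoe] with x h1 h2 h3 h4
      rw [h1, Pi.add_apply, h2, h3, Pi.smul_apply, Pi.smul_apply, h4]
      simp only [smul_eq_mul]; ring
    have hfactpos : ∀ x, 0 ≤ 1 + k * (a - g x) := by
      intro x
      have h1 : |a - g x| ≤ 1 := by
        rw [abs_le]; constructor <;> nlinarith [hgpos x, hg1 x]
      nlinarith [abs_le.mp hk, abs_le.mp h1, neg_abs_le (k * (a - g x)),
        abs_mul k (a - g x), mul_le_mul hk h1 (abs_nonneg _) (by norm_num : (0:ℝ) ≤ 1/2)]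
    have hco' : (fun x => ‖(⇑(b • w + (b * k) • P)) x‖) =ᵐ[μ]
        fun x => ‖(b * (1 + k * (a - g x))) * w x‖ := by
      filter_upwards [hco] with x hx; rw [hx]
    rw [L1.norm_eq_integral_norm, integral_congr_ae hco']
    have : ∀ x, ‖(b * (1 + k * (a - g x))) * w x‖ =
        |b| * ((1 + k * (a - g x)) * |w x|) := by
      intro x
      rw [Real.norm_eq_abs, abs_mul, abs_mul, abs_of_nonneg (hfactpos x)]
      ring
    simp_rw [this]
    rw [integral_const_mul]
    congr 1
    have hsplit : ∀ x, (1 + k * (a - g x)) * |w x| = |w x| + k * ((a - g x) * |w x|) := by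
      intro x; ring
    simp_rw [hsplit]
    have hint2 : Integrable (fun x => (a - g x) * |w x|) μ := by
      have : ∀ x, (a - g x) * |w x| = a * |w x| - g x * |w x| := fun x => by ring
      simp_rw [this]
      exact (hwi.abs.const_mul a).sub hgawi
    rw [integral_add hwi.abs (hint2.const_mul k), integral_const_mul, hmean]
    simp [hIdef]
  have hdistuv : dist u v = I := by
    rw [dist_eq_norm, ← hInorm, hwdef, ← norm_neg]; congr 1; abel
  -- the two geodesics
  refine ⟨fun t => u + (t : ℝ) • w, fun t => u + (t : ℝ) • w + ((t : ℝ) * (1 - (t : ℝ)) / 2) • P,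
    ⟨?_, ?_, ?_⟩, ⟨?_, ?_, ?_⟩, ?_⟩
  · simp
  · simp [hwdef]
  · intro s t
    rw [hdistuv, dist_eq_norm]
    have h : (u + (s : ℝ) • w) - (u + (t : ℝ) • w) = ((s : ℝ) - t) • w + (((s:ℝ) - t) * 0) • P := by
      module
    rw [h]
    exact hnorm _ 0 (by norm_num)
  · simp
  · simp [hwdef]
  · intro s t
    rw [hdistuv, dist_eq_norm]
    have key : (u + (s : ℝ) • w + ((s : ℝ) * (1 - (s : ℝ)) / 2) • P)
        - (u + (t : ℝ) • w + ((t : ℝ) * (1 - (t : ℝ)) / 2) • P)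
        = ((s : ℝ) - t) • w + (((s : ℝ) - t) * ((1 - (s:ℝ) - (t:ℝ)) / 2)) • P := by
      module
    obtain ⟨hs0, hs1⟩ := s.2
    obtain ⟨ht0, ht1⟩ := t.2
    rw [key]
    exact hnorm _ _ (abs_le.mpr ⟨by linarith only [hs0, hs1, ht0, ht1],
      by linarith only [hs0, hs1, ht0, ht1]⟩)
  · -- distinctness
    intro heq
    have h2 := congrFun heq ⟨1/2, by norm_num, by norm_num⟩
    simp only at h2
    have hP0 : ((1:ℝ)/2 * (1 - 1/2) / 2) • P = 0 := by
      have := h2.symm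
      rwa [add_eq_left] at this
    have : P = 0 := by
      have h8 : ((1:ℝ)/2 * (1 - 1/2) / 2) ≠ 0 := by norm_num
      exact (smul_eq_zero.mp hP0).resolve_left h8
    -- P = 0 implies (a - g x) * w x = 0 a.e.
    have hae : ∀ᵐ x ∂μ, (a - g x) * w x = 0 := by
      have := hPcoe.symm.trans (Lp.eq_zero_iff_ae_eq_zero.mp this)
      filter_upwards [this] with x hx using hx
    -- but {g = a} is null
    have hga : ∀ᵐ x ∂μ, g x ≠ a := by
      rcases eq_or_ne a 0 with ha | ha
      · filter_upwards with x; rw [ha]; exact (hgpos x).ne'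
      · have hline : ∀ r : ℝ, ∀ᵐ x ∂μ, x i0 ≠ r := by
          intro r
          have h1 : ∀ᵐ x ∂(volume : Measure (Fin n → ℝ)), x i0 ≠ r := by
            rw [volume_pi]
            exact Measure.ae_eval_ne (fun (_ : Fin n) => (volume : Measure ℝ)) i0 r
          rw [hμ]
          exact ae_restrict_of_ae h1
        filter_upwards [hline (Real.sqrt (a⁻¹ - 1)), hline (-Real.sqrt (a⁻¹ - 1))]
          with x hx1 hx2 hgxa
        have hx2' : (x i0)^2 = a⁻¹ - 1 := by
          have h1 : (1 + (x i0)^2)⁻¹ = a := hgxa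
          have h3 : 1 + (x i0)^2 = a⁻¹ := inv_eq_iff_eq_inv.mp h1
          linarith
        have habs : |x i0| = Real.sqrt (a⁻¹ - 1) := by
          rw [← hx2', Real.sqrt_sq_eq_abs]
        rcases (abs_eq (Real.sqrt_nonneg _)).mp habs with h | h
        · exact hx1 h
        · exact hx2 h
    have hwzero : ⇑w =ᵐ[μ] 0 := by
      filter_upwards [hae, hga] with x h1 h2
      have h3 : a - g x ≠ 0 := fun h => h2 (sub_eq_zero.mp h).symm
      show (w : (Fin n → ℝ) → ℝ) x = (0 : ℝ)
      exact (mul_eq_zero.mp h1).resolve_left h3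
    exact hw0 (Lp.eq_zero_iff_ae_eq_zero.mpr hwzero)
end

section
/- Let n ∈ ℕ, let K ⊆ ℝⁿ be Lebesgue measurable with n-dimensional Lebesgue measure μ(K) = 1, and let p ∈ (1, ∞]. Then the Lebesgue space L^p(K) is not multigeodesic; in fact, there is exactly one geodesic from 0 to the element of L^p(K) represented by the constant function 1 (the indicator function χ_K of K). -/
open MeasureTheory ENNReal

private lemma convex_aux {q s a b : ℝ} (hs0 : 0 < s) (hs1 : s < 1)
    (ha : 0 ≤ a) (hb : 0 ≤ b) :
    a ^ q / s ^ (q - 1) + b ^ q / (1 - s) ^ (q - 1)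
      = s * (a / s) ^ q + (1 - s) * (b / (1 - s)) ^ q := by
  have h1s : (0:ℝ) < 1 - s := by linarith
  rw [Real.div_rpow ha hs0.le, Real.div_rpow hb h1s.le,
    Real.rpow_sub_one hs0.ne' q, Real.rpow_sub_one h1s.ne' q]
  have hsq : (0:ℝ) < s ^ q := Real.rpow_pos_of_pos hs0 q
  have h1sq : (0:ℝ) < (1 - s) ^ q := Real.rpow_pos_of_pos h1s q
  field_simp

private lemma ptwise {q s a b : ℝ} (hq : 1 < q) (hs0 : 0 < s) (hs1 : s < 1)
    (ha : 0 ≤ a) (hb : 0 ≤ b) (hab : 1 ≤ a + b) :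
    1 ≤ a ^ q / s ^ (q - 1) + b ^ q / (1 - s) ^ (q - 1) ∧
      (a ^ q / s ^ (q - 1) + b ^ q / (1 - s) ^ (q - 1) = 1 → a = s ∧ b = 1 - s) := by
  have h1s : (0:ℝ) < 1 - s := by linarith
  have hA : (0:ℝ) ≤ a / s := div_nonneg ha hs0.le
  have hB : (0:ℝ) ≤ b / (1 - s) := div_nonneg hb h1s.le
  have hsum : s * (a / s) + (1 - s) * (b / (1 - s)) = a + b := by field_simp
  have hconv := (strictConvexOn_rpow hq).convexOn.2 (Set.mem_Ici.mpr hA)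
    (Set.mem_Ici.mpr hB) hs0.le h1s.le (by ring)
  simp only [smul_eq_mul] at hconv
  rw [hsum] at hconv
  have hab_pow : 1 ≤ (a + b) ^ q := Real.one_le_rpow hab (by linarith)
  have key := convex_aux (q := q) hs0 hs1 ha hb
  constructor
  · rw [key]; linarith
  · intro heq
    rw [key] at heq
    have habe : a + b = 1 := by
      by_contra hne
      have h1 : 1 < a + b := lt_of_le_of_ne hab (Ne.symm hne)
      have : 1 < (a + b) ^ q :=
        (Real.one_lt_rpow_iff_of_pos (by linarith)).mpr (Or.inl ⟨h1, by linarith⟩)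
      linarith
    have hABeq : a / s = b / (1 - s) := by
      by_contra hne
      have hstrict := (strictConvexOn_rpow hq).2 (Set.mem_Ici.mpr hA)
        (Set.mem_Ici.mpr hB) hne hs0 h1s (by ring)
      simp only [smul_eq_mul] at hstrict
      rw [hsum, habe] at hstrict
      simp only [Real.one_rpow] at hstrict
      linarith
    have hcross : a * (1 - s) = b * s := by
      field_simp at hABeq
      linarith [hABeq]
    constructor <;> nlinarith

private lemma integral_rpow_norm {α : Type*} [MeasurableSpace α] {μ : Measure α}
    {p : ℝ≥0∞} [Fact (1 ≤ p)] (hp0 : p ≠ 0) (hpt : p ≠ ∞) (f : Lp ℝ p μ) :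
    ∫ a, ‖f a‖ ^ p.toReal ∂μ = ‖f‖ ^ p.toReal := by
  have h := (Lp.memLp f).eLpNorm_eq_integral_rpow_norm hp0 hpt
  have hint : 0 ≤ ∫ a, ‖f a‖ ^ p.toReal ∂μ :=
    integral_nonneg fun a => Real.rpow_nonneg (norm_nonneg _) _
  have hq : p.toReal ≠ 0 := (ENNReal.toReal_pos hp0 hpt).ne'
  rw [Lp.norm_def, h, ENNReal.toReal_ofReal (Real.rpow_nonneg hint _)]
  exact (Real.rpow_inv_rpow hint hq).symm

private lemma key_unique {α : Type*} [MeasurableSpace α] {μ : Measure α}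
    [IsProbabilityMeasure μ] {p : ℝ≥0∞} (hp : 1 < p) [Fact (1 ≤ p)]
    (f : Lp ℝ p μ) {s : ℝ} (hs0 : 0 ≤ s) (hs1 : s ≤ 1)
    (χ : Lp ℝ p μ) (hχ : ⇑χ =ᵐ[μ] fun _ => (1:ℝ))
    (hf : ‖f‖ = s) (hfχ : ‖χ - f‖ = 1 - s) : ⇑f =ᵐ[μ] fun _ => s := by
  have hsub : ⇑(χ - f) =ᵐ[μ] fun a => 1 - f a := by
    filter_upwards [Lp.coeFn_sub χ f, hχ] with a h1 h2
    rw [h1, Pi.sub_apply, h2]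
  -- edge cases
  rcases eq_or_lt_of_le hs0 with hs0' | hs0'
  · have : f = 0 := by
      rw [← norm_eq_zero, hf, ← hs0']
    rw [this, ← hs0']
    exact Lp.coeFn_zero ℝ p μ
  rcases eq_or_lt_of_le hs1 with hs1' | hs1'
  · have : χ - f = 0 := by
      rw [← norm_eq_zero, hfχ, hs1', sub_self]
    have hfe : f = χ := by
      have := sub_eq_zero.mp this
      exact this.symm
    rw [hfe, hs1']
    exact hχ
  by_cases hpt : p = ∞
  -- p = ∞ : pointwise essential sup bounds
  · subst hpt
    have bound : ∀ (g : Lp ℝ ∞ μ), ∀ᵐ a ∂μ, ‖g a‖ ≤ ‖g‖ := by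
      intro g
      filter_upwards [ae_le_eLpNormEssSup (f := ⇑g) (μ := μ)] with a hle
      have hne : eLpNorm g ∞ μ ≠ ∞ := Lp.eLpNorm_ne_top g
      rw [eLpNorm_exponent_top] at hne
      have := ENNReal.toReal_mono hne hle
      rwa [toReal_enorm, ← eLpNorm_exponent_top, ← Lp.norm_def] at this
    filter_upwards [bound f, bound (χ - f), hsub] with a h1 h2 h3
    rw [hf, Real.norm_eq_abs] at h1
    rw [hfχ, h3, Real.norm_eq_abs] at h2
    have ha1 := abs_le.mp h1
    have ha2 := abs_le.mp h2
    have : f a = s := by linarith [ha1.1, ha1.2, ha2.1, ha2.2]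
    simpa using this
  -- 1 < p < ∞
  · have hp0 : p ≠ 0 := (zero_lt_one.trans hp).ne'
    set q := p.toReal with hqdef
    have hq : 1 < q := by
      have h1 : (1:ℝ≥0∞).toReal < p.toReal :=
        (ENNReal.toReal_lt_toReal ENNReal.one_ne_top hpt).mpr hp
      simpa using h1
    have h1s : (0:ℝ) < 1 - s := by linarith
    have intf : Integrable (fun a => ‖f a‖ ^ q) μ :=
      (Lp.memLp f).integrable_norm_rpow hp0 hpt
    have intg' : Integrable (fun a => ‖(χ - f) a‖ ^ q) μ :=
      (Lp.memLp (χ - f)).integrable_norm_rpow hp0 hpt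
    have intg : Integrable (fun a => ‖1 - f a‖ ^ q) μ := by
      refine intg'.congr ?_
      filter_upwards [hsub] with a h1
      rw [h1]
    have I1 : ∫ a, ‖f a‖ ^ q ∂μ = s ^ q := by
      rw [integral_rpow_norm hp0 hpt f, hf]
    have I2 : ∫ a, ‖1 - f a‖ ^ q ∂μ = (1 - s) ^ q := by
      rw [show (fun a => ‖1 - f a‖ ^ q) = fun a => ‖1 - f a‖ ^ q from rfl]
      have := integral_rpow_norm hp0 hpt (χ - f)
      rw [hfχ] at this
      rw [← this]
      refine integral_congr_ae ?_
      filter_upwards [hsub] with a h1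
      rw [h1]
    set F : α → ℝ := fun a => ‖f a‖ ^ q / s ^ (q - 1) + ‖1 - f a‖ ^ q / (1 - s) ^ (q - 1)
      with hF
    have intF : Integrable F μ := (intf.div_const _).add (intg.div_const _)
    have hIF : ∫ a, F a ∂μ = 1 := by
      rw [hF, integral_add (intf.div_const _) (intg.div_const _), integral_div,
        integral_div, I1, I2]
      have e1 : s ^ q / s ^ (q - 1) = s := by
        rw [Real.rpow_sub_one hs0'.ne' q]
        have : (0:ℝ) < s ^ q := Real.rpow_pos_of_pos hs0' q
        field_simp
      have e2 : (1 - s) ^ q / (1 - s) ^ (q - 1) = 1 - s := by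
        rw [Real.rpow_sub_one h1s.ne' q]
        have : (0:ℝ) < (1 - s) ^ q := Real.rpow_pos_of_pos h1s q
        field_simp
      rw [e1, e2]
      ring
    have habs : ∀ a, 1 ≤ ‖f a‖ + ‖1 - f a‖ := by
      intro a
      have := norm_add_le (f a) (1 - f a)
      simpa using this
    have hge : ∀ a, 1 ≤ F a := by
      intro a
      exact (ptwise hq hs0' hs1' (norm_nonneg _) (norm_nonneg _) (habs a)).1
    have hint1 : Integrable (fun a => F a - 1) μ := intF.sub (integrable_const 1)
    have hzero : (fun a => F a - 1) =ᵐ[μ] 0 := by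
      refine (integral_eq_zero_iff_of_nonneg_ae (f := fun a => F a - 1)
        (ae_of_all μ fun a => by simpa using hge a) hint1).mp ?_
      rw [integral_sub intF (integrable_const 1), hIF]
      simp
    filter_upwards [hzero] with a ha
    have hFa : F a = 1 := by
      have : F a - 1 = 0 := ha
      linarith
    obtain ⟨hnf, _⟩ := (ptwise hq hs0' hs1' (norm_nonneg _) (norm_nonneg _) (habs a)).2 hFa
    rw [Real.norm_eq_abs] at hnf
    rcases (abs_eq hs0).mp hnf with h | h
    · simpa using h
    · exfalso
      obtain ⟨_, hn1f⟩ := (ptwise hq hs0' hs1' (norm_nonneg _) (norm_nonneg _) (habs a)).2 hFa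
      rw [Real.norm_eq_abs, h] at hn1f
      have : |1 - -s| = 1 + s := by rw [abs_of_pos (by linarith)]; ring
      rw [this] at hn1f
      linarith

private lemma main_aux {α : Type*} [MeasurableSpace α] {μ : Measure α}
    [IsProbabilityMeasure μ] {K : Set α} (hK : MeasurableSet K) (hμK : μ K ≠ ∞)
    (hμK1 : μ K = 1) {p : ℝ≥0∞} (hp : 1 < p) [Fact (1 ≤ p)] :
    ¬ Multigeodesic (Lp ℝ p μ) ∧
      ∃! γ : unitInterval → Lp ℝ p μ,
        IsGeodesic 0 (indicatorConstLp p hK hμK (1 : ℝ)) γ := by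
  set χ := indicatorConstLp p hK hμK (1:ℝ) with hχdef
  have hp0 : p ≠ 0 := (zero_lt_one.trans hp).ne'
  have hKc : μ Kᶜ = 0 := by
    have h := measure_compl hK hμK
    rw [hμK1, measure_univ, tsub_self] at h
    exact h
  have hmem : ∀ᵐ x ∂μ, x ∈ K := by
    rw [MeasureTheory.ae_iff]
    exact hKc
  have hχae : ⇑χ =ᵐ[μ] fun _ => (1:ℝ) := by
    filter_upwards [indicatorConstLp_coeFn (p := p) (hs := hK) (hμs := hμK) (c := (1:ℝ)),
      hmem] with x h1 h2
    rw [hχdef, h1, Set.indicator_of_mem h2]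
  have hχnorm : ‖χ‖ = 1 := by
    rcases eq_or_ne p ∞ with hpt | hpt
    · subst hpt
      rw [hχdef, norm_indicatorConstLp_top (by simp [hμK1])]
      simp
    · rw [hχdef, norm_indicatorConstLp hp0 hpt, measureReal_def, hμK1]
      simp
  have hχ0 : χ ≠ 0 := by
    intro h
    rw [h, norm_zero] at hχnorm
    norm_num at hχnorm
  have hdist : dist (0 : Lp ℝ p μ) χ = 1 := by rw [dist_zero_left, hχnorm]
  set γ₀ : unitInterval → Lp ℝ p μ := fun s => (s : ℝ) • χ with hγ₀
  have hgeo : IsGeodesic 0 χ γ₀ := by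
    refine ⟨by simp [hγ₀], by simp [hγ₀], fun s t => ?_⟩
    rw [hγ₀, hdist]
    simp only
    rw [dist_eq_norm, ← sub_smul, norm_smul, Real.norm_eq_abs, hχnorm]
  have huniq : ∀ σ : unitInterval → Lp ℝ p μ, IsGeodesic 0 χ σ → σ = γ₀ := by
    intro σ ⟨h0, h1, hd⟩
    funext s
    have hns : ‖σ s‖ = (s : ℝ) := by
      have h := hd s 0
      rw [h0, hdist, dist_zero_right] at h
      simpa [abs_of_nonneg s.2.1] using h
    have hnd : ‖χ - σ s‖ = 1 - (s : ℝ) := by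
      have h := hd 1 s
      rw [h1, hdist, dist_eq_norm] at h
      have hle : (s:ℝ) ≤ 1 := s.2.2
      simpa [abs_of_nonneg (by linarith : (0:ℝ) ≤ 1 - (s:ℝ))] using h
    have hae := key_unique hp (σ s) s.2.1 s.2.2 χ hχae hns hnd
    refine Lp.ext ?_
    have hsm : ⇑((s : ℝ) • χ) =ᵐ[μ] fun _ => (s : ℝ) := by
      filter_upwards [Lp.coeFn_smul (s : ℝ) χ, hχae] with x hx1 hx2
      rw [hx1]
      simp [hx2]
    exact hae.trans hsm.symm
  constructor
  · intro h
    obtain ⟨γ, σ, hγ, hσ, hne⟩ := h 0 χ (Ne.symm hχ0)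
    exact hne ((huniq γ hγ).trans (huniq σ hσ).symm)
  · exact ⟨γ₀, hgeo, huniq⟩

theorem statement10 (n : ℕ) (K : Set (Fin n → ℝ))
    (hK : MeasurableSet K) (hvol : volume K = 1)
    (p : ℝ≥0∞) (hp : 1 < p) [Fact (1 ≤ p)] :
    ¬ Multigeodesic (Lp ℝ p (volume.restrict K)) ∧
      ∃! γ : unitInterval → Lp ℝ p (volume.restrict K),
        IsGeodesic 0
          (indicatorConstLp p hK
            (by rw [Measure.restrict_apply_self, hvol]; exact ENNReal.one_ne_top) (1 : ℝ))
          γ := by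
  haveI : IsProbabilityMeasure (volume.restrict K) :=
    ⟨by rw [Measure.restrict_apply_univ, hvol]⟩
  exact main_aux hK (by rw [Measure.restrict_apply_self, hvol]; exact ENNReal.one_ne_top)
    (by rw [Measure.restrict_apply_self, hvol]) hp
end

section
/- Let (X, d) be a multigeodesic metric space, let γ : [0,1] → X be a geodesic from γ(0) to γ(1) with γ(0) ≠ γ(1), and let t ∈ (0,1). Then there exists a geodesic τ : [0,1] → X from γ(0) to γ(1) such that inf{ s ∈ (0,1) : τ(s) ≠ γ(s) } = t. -/
open Set

theorem statement13 {X : Type*} [MetricSpace X] (hX : Multigeodesic X)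
    (γ : unitInterval → X) (hγ : IsGeodesic (γ 0) (γ 1) γ) (hne : γ 0 ≠ γ 1)
    (t : ℝ) (ht : t ∈ Set.Ioo (0 : ℝ) 1) :
    ∃ τ : unitInterval → X, IsGeodesic (γ 0) (γ 1) τ ∧
      sInf (Subtype.val '' {s : unitInterval | 0 < (s : ℝ) ∧ (s : ℝ) < 1 ∧ τ s ≠ γ s}) = t := by
  obtain ⟨ht0, ht1⟩ := ht
  obtain ⟨D, hD_def⟩ : ∃ D : ℝ, D = dist (γ 0) (γ 1) := ⟨_, rfl⟩
  have hD : 0 < D := hD_def ▸ dist_pos.mpr hne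
  -- the clamped curve on ℝ
  obtain ⟨γ', hγ'def⟩ : ∃ γ' : ℝ → X, γ' = fun x => γ (projIcc 0 1 zero_le_one x) := ⟨_, rfl⟩
  have hcoe : ∀ s : unitInterval, γ' (s : ℝ) = γ s := by
    intro s; simp [hγ'def]
  have hγ'd : ∀ x y : ℝ, x ∈ Icc (0:ℝ) 1 → y ∈ Icc (0:ℝ) 1 →
      dist (γ' x) (γ' y) = |x - y| * D := by
    intro x y hx hy
    have h := hγ.2.2 (projIcc 0 1 zero_le_one x) (projIcc 0 1 zero_le_one y)
    rw [projIcc_of_mem _ hx, projIcc_of_mem _ hy] at h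
    simp only [hγ'def]
    rw [projIcc_of_mem _ hx, projIcc_of_mem _ hy, ← hD_def] at *
    simpa using h
  -- the dyadic sequence
  obtain ⟨m, hmdef⟩ : ∃ m : ℕ → ℝ, m = fun n => t + (1 - t) / 2 ^ n := ⟨_, rfl⟩
  have hm0 : m 0 = 1 := by simp [hmdef]
  have hmt : ∀ n, t < m n := by
    intro n
    have : 0 < (1 - t) / 2 ^ n := div_pos (by linarith) (by positivity)
    simp only [hmdef]; linarith
  have hm1 : ∀ n, m n ≤ 1 := by
    intro n
    have h2 : (1:ℝ) ≤ 2 ^ n := one_le_pow₀ (by norm_num)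
    have : (1 - t) / 2 ^ n ≤ 1 - t := div_le_self (by linarith) h2
    simp only [hmdef]; linarith
  have hm01 : ∀ n, m n ∈ Icc (0:ℝ) 1 := fun n => ⟨le_of_lt (lt_trans ht0 (hmt n)), hm1 n⟩
  have hdiff : ∀ n, m n - m (n + 1) = (1 - t) / 2 ^ (n + 1) := by
    intro n
    have h0 : (2:ℝ) ^ n ≠ 0 := by positivity
    simp only [hmdef]
    field_simp
    ring
  have hmono : ∀ n, m (n + 1) < m n := by
    intro n
    have : 0 < (1 - t) / 2 ^ (n + 1) := div_pos (by linarith) (by positivity)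
    linarith [hdiff n]
  -- the index function
  obtain ⟨idx, hidxdef⟩ : ∃ idx : ℝ → ℕ, idx = fun s => Nat.log 2 ⌊(1 - t) / (s - t)⌋₊ :=
    ⟨_, rfl⟩
  have hidx : ∀ s : ℝ, t < s → s ≤ 1 → m (idx s + 1) < s ∧ s ≤ m (idx s) := by
    intro s hs hs1
    have hst : 0 < s - t := by linarith
    have hq1 : 1 ≤ (1 - t) / (s - t) := (one_le_div hst).mpr (by linarith)
    have hfl : 1 ≤ ⌊(1 - t) / (s - t)⌋₊ := Nat.le_floor (by exact_mod_cast hq1)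
    have hidxs : idx s = Nat.log 2 ⌊(1 - t) / (s - t)⌋₊ := by rw [hidxdef]
    have h1 : (2:ℝ) ^ idx s ≤ (1 - t) / (s - t) := by
      have h := Nat.pow_log_le_self 2 (by omega : ⌊(1 - t) / (s - t)⌋₊ ≠ 0)
      rw [hidxs]
      calc (2:ℝ) ^ Nat.log 2 ⌊(1 - t) / (s - t)⌋₊ ≤ (⌊(1 - t) / (s - t)⌋₊ : ℝ) := by
            exact_mod_cast h
        _ ≤ (1 - t) / (s - t) := Nat.floor_le (by linarith)
    have h2 : (1 - t) / (s - t) < (2:ℝ) ^ (idx s + 1) := by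
      have h : ⌊(1 - t) / (s - t)⌋₊ + 1 ≤ 2 ^ (idx s + 1) := by
        rw [hidxs]
        exact Nat.lt_pow_succ_log_self (by norm_num) _
      have h'' : (⌊(1 - t) / (s - t)⌋₊ : ℝ) + 1 ≤ (2:ℝ) ^ (idx s + 1) := by exact_mod_cast h
      calc (1 - t) / (s - t) < (⌊(1 - t) / (s - t)⌋₊ : ℝ) + 1 := Nat.lt_floor_add_one _
        _ ≤ _ := h''
    constructor
    · have hp : (0:ℝ) < 2 ^ (idx s + 1) := by positivity
      have : (1 - t) / 2 ^ (idx s + 1) < s - t := by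
        rw [div_lt_iff₀ hp]
        rw [div_lt_iff₀ hst] at h2
        linarith
      simp only [hmdef]; linarith
    · have hp : (0:ℝ) < 2 ^ idx s := by positivity
      have : s - t ≤ (1 - t) / 2 ^ idx s := by
        rw [le_div_iff₀ hp]
        rw [le_div_iff₀ hst] at h1
        linarith
      simp only [hmdef]; linarith
  have hidx_eq : ∀ (n : ℕ) (s : ℝ), m (n + 1) < s → s ≤ m n → idx s = n := by
    intro n s h1 h2
    have hst : 0 < s - t := by linarith [hmt (n+1)]
    have hb1 : (2:ℝ) ^ n ≤ (1 - t) / (s - t) := by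
      have hle : s - t ≤ (1 - t) / 2 ^ n := by simp only [hmdef] at h2; linarith
      have hp : (0:ℝ) < 2 ^ n := by positivity
      rw [le_div_iff₀ hst]
      rw [le_div_iff₀ hp] at hle
      linarith
    have hb2 : (1 - t) / (s - t) < (2:ℝ) ^ (n + 1) := by
      have hlt : (1 - t) / 2 ^ (n+1) < s - t := by simp only [hmdef] at h1; linarith
      have hp : (0:ℝ) < 2 ^ (n+1) := by positivity
      rw [div_lt_iff₀ hst]
      rw [div_lt_iff₀ hp] at hlt
      linarith
    have hfl1 : 2 ^ n ≤ ⌊(1 - t) / (s - t)⌋₊ := Nat.le_floor (by exact_mod_cast hb1)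
    have hfl2 : ⌊(1 - t) / (s - t)⌋₊ < 2 ^ (n + 1) := by
      have hq0 : 0 ≤ (1 - t) / (s - t) := le_trans (by positivity) hb1
      have h := Nat.floor_le hq0
      have h' : (⌊(1 - t) / (s - t)⌋₊ : ℝ) < (2:ℝ) ^ (n+1) := lt_of_le_of_lt h hb2
      exact_mod_cast h'
    rw [hidxdef]
    exact Nat.log_eq_of_pow_le_of_lt_pow hfl1 hfl2
  -- distances between dyadic points
  have hLD : ∀ n, dist (γ' (m (n + 1))) (γ' (m n)) = (m n - m (n + 1)) * D := by
    intro n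
    rw [hγ'd _ _ (hm01 (n+1)) (hm01 n), abs_of_nonpos (by linarith [hmono n])]
    ring_nf
  -- choose the alternative geodesics on each dyadic piece
  have claim : ∀ n : ℕ, ∃ (δ : unitInterval → X) (s₀ : unitInterval),
      IsGeodesic (γ' (m (n + 1))) (γ' (m n)) δ ∧
      δ s₀ ≠ γ' (m (n + 1) + (s₀ : ℝ) * (m n - m (n + 1))) := by
    intro n
    have hL : 0 < m n - m (n + 1) := by linarith [hmono n]
    have huv : γ' (m (n + 1)) ≠ γ' (m n) := by
      intro h
      have h2 := hLD n
      rw [h, dist_self] at h2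
      nlinarith
    obtain ⟨ρ, hρdef⟩ : ∃ ρ : unitInterval → X,
        ρ = fun x : unitInterval => γ' (m (n + 1) + (x : ℝ) * (m n - m (n + 1))) := ⟨_, rfl⟩
    have hmem : ∀ x : unitInterval, m (n + 1) + (x : ℝ) * (m n - m (n + 1)) ∈ Icc (0:ℝ) 1 := by
      intro x
      have hx0 : (0:ℝ) ≤ x := x.2.1
      have hx1 : (x:ℝ) ≤ 1 := x.2.2
      constructor
      · nlinarith [(hm01 (n+1)).1]
      · nlinarith [(hm01 n).2]
    have hρ : IsGeodesic (γ' (m (n + 1))) (γ' (m n)) ρ := by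
      refine ⟨?_, ?_, ?_⟩
      · simp only [hρdef]
        congr 1
        rw [show ((0 : unitInterval) : ℝ) = 0 by simp]
        ring
      · simp only [hρdef]
        congr 1
        rw [show ((1 : unitInterval) : ℝ) = 1 by simp]
        ring
      · intro a b
        simp only [hρdef]
        rw [hγ'd _ _ (hmem a) (hmem b), hLD n]
        rw [show m (n+1) + (a:ℝ) * (m n - m (n+1)) - (m (n+1) + (b:ℝ) * (m n - m (n+1)))
            = ((a:ℝ) - b) * (m n - m (n+1)) by ring]
        rw [abs_mul, abs_of_pos hL]
        ring
    obtain ⟨g, σ, hg, hσ, hgs⟩ := hX _ _ huv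
    have hex : ∃ δ : unitInterval → X, IsGeodesic (γ' (m (n + 1))) (γ' (m n)) δ ∧ δ ≠ ρ := by
      by_cases hcase : g = ρ
      · exact ⟨σ, hσ, by rw [← hcase]; exact Ne.symm hgs⟩
      · exact ⟨g, hg, hcase⟩
    obtain ⟨δ, hδ, hδρ⟩ := hex
    obtain ⟨s₀, hs₀⟩ := Function.ne_iff.mp hδρ
    rw [hρdef] at hs₀
    exact ⟨δ, s₀, hδ, hs₀⟩
  choose δ s₀ hδ hs₀ using claim
  have hδd : ∀ n (a b : unitInterval),
      dist (δ n a) (δ n b) = |(a:ℝ) - b| * ((m n - m (n + 1)) * D) := by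
    intro n a b
    rw [(hδ n).2.2 a b, hLD n]
  -- the new geodesic
  obtain ⟨τ, hτdef⟩ : ∃ τ : unitInterval → X, τ = fun s : unitInterval =>
      if _h : (s : ℝ) ≤ t then γ s
      else δ (idx s) (projIcc 0 1 zero_le_one
        (((s : ℝ) - m (idx s + 1)) / (m (idx s) - m (idx s + 1)))) := ⟨_, rfl⟩
  have hτle : ∀ s : unitInterval, (s : ℝ) ≤ t → τ s = γ s := by
    intro s h; simp only [hτdef]; rw [dif_pos h]
  have hτgt : ∀ s : unitInterval, t < (s : ℝ) → τ s = δ (idx s) (projIcc 0 1 zero_le_one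
      (((s : ℝ) - m (idx s + 1)) / (m (idx s) - m (idx s + 1)))) := by
    intro s h; simp only [hτdef]; rw [dif_neg (not_le.mpr h)]
  -- distances to the two dyadic endpoints of the piece containing s
  have hpiece : ∀ s : unitInterval, t < (s : ℝ) →
      dist (γ' (m (idx s + 1))) (τ s) = ((s : ℝ) - m (idx s + 1)) * D ∧
      dist (τ s) (γ' (m (idx s))) = (m (idx s) - (s : ℝ)) * D := by
    intro s hs
    obtain ⟨h1, h2⟩ := hidx (s : ℝ) hs s.2.2
    have hL : 0 < m (idx (s : ℝ)) - m (idx (s : ℝ) + 1) := by linarith [hmono (idx (s : ℝ))]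
    have hr0 : 0 ≤ ((s : ℝ) - m (idx (s : ℝ) + 1)) / (m (idx (s : ℝ)) - m (idx (s : ℝ) + 1)) :=
      div_nonneg (by linarith) (le_of_lt hL)
    have hr1 : ((s : ℝ) - m (idx (s : ℝ) + 1)) / (m (idx (s : ℝ)) - m (idx (s : ℝ) + 1)) ≤ 1 := by
      rw [div_le_one hL]; linarith
    have hτv := hτgt s hs
    have hproj : ((projIcc 0 1 zero_le_one
        (((s : ℝ) - m (idx (s : ℝ) + 1)) / (m (idx (s : ℝ)) - m (idx (s : ℝ) + 1)))) : ℝ)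
        = ((s : ℝ) - m (idx (s : ℝ) + 1)) / (m (idx (s : ℝ)) - m (idx (s : ℝ) + 1)) := by
      rw [projIcc_of_mem _ ⟨hr0, hr1⟩]
    constructor
    · rw [hτv, ← (hδ (idx (s : ℝ))).1, hδd _ 0 _, hproj]
      rw [show ((0 : unitInterval) : ℝ) = 0 by simp]
      rw [abs_of_nonpos (by linarith :
        (0:ℝ) - ((s : ℝ) - m (idx (s : ℝ) + 1)) / (m (idx (s : ℝ)) - m (idx (s : ℝ) + 1)) ≤ 0)]
      field_simp
      ring
    · rw [hτv, ← (hδ (idx (s : ℝ))).2.1, hδd _ _ 1, hproj]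
      rw [show ((1 : unitInterval) : ℝ) = 1 by simp]
      rw [abs_of_nonpos (by linarith :
        ((s : ℝ) - m (idx (s : ℝ) + 1)) / (m (idx (s : ℝ)) - m (idx (s : ℝ) + 1)) - (1:ℝ) ≤ 0)]
      field_simp
      ring
  -- τ at dyadic points equals γ'
  have hτm : ∀ (n : ℕ) (s : unitInterval), (s : ℝ) = m n → τ s = γ' (m n) := by
    intro n s hsm
    have hs : t < (s : ℝ) := hsm ▸ hmt n
    have h2 := (hpiece s hs).2
    have hidxs : idx (s : ℝ) = n := hidx_eq n _ (hsm ▸ hmono n) (le_of_eq hsm)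
    rw [hidxs, hsm] at h2
    simp only [sub_self, zero_mul] at h2
    exact dist_eq_zero.mp h2
  -- distance from a dyadic point to later values of τ
  have hC : ∀ (k : ℕ) (s : unitInterval), m k ≤ (s : ℝ) →
      dist (γ' (m k)) (τ s) ≤ ((s : ℝ) - m k) * D := by
    intro k
    induction k with
    | zero =>
      intro s hsk
      have hs1 : (s : ℝ) = 1 := le_antisymm s.2.2 (hm0 ▸ hsk)
      rw [hτm 0 s (by rw [hs1, hm0]), dist_self, hs1, hm0]
      simp
    | succ k ih =>
      intro s hsk
      by_cases hcase : (s : ℝ) ≤ m k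
      · by_cases heq : (s : ℝ) = m (k + 1)
        · rw [hτm (k+1) s heq, dist_self, heq]; simp
        · have hlt : m (k + 1) < (s : ℝ) := lt_of_le_of_ne hsk (Ne.symm heq)
          have hs : t < (s : ℝ) := lt_trans (hmt (k+1)) hlt
          have hidxs : idx (s : ℝ) = k := hidx_eq k _ hlt hcase
          have h := (hpiece s hs).1
          rw [hidxs] at h
          exact le_of_eq h
      · push_neg at hcase
        have h1 : dist (γ' (m (k + 1))) (τ s) ≤
            dist (γ' (m (k + 1))) (γ' (m k)) + dist (γ' (m k)) (τ s) := dist_triangle _ _ _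
        have h2 := ih s (le_of_lt hcase)
        have h3 := hLD k
        calc dist (γ' (m (k + 1))) (τ s) ≤ _ := h1
          _ ≤ (m k - m (k + 1)) * D + ((s : ℝ) - m k) * D := by rw [h3]; linarith
          _ = ((s : ℝ) - m (k + 1)) * D := by ring
  -- upper bound for the distance along τ
  have hup : ∀ s r : unitInterval, (s : ℝ) ≤ (r : ℝ) →
      dist (τ s) (τ r) ≤ ((r : ℝ) - (s : ℝ)) * D := by
    intro s r hsr
    by_cases hr : (r : ℝ) ≤ t
    · have hs : (s : ℝ) ≤ t := le_trans hsr hr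
      rw [hτle s hs, hτle r hr, ← hcoe s, ← hcoe r]
      rw [hγ'd _ _ ⟨s.2.1, s.2.2⟩ ⟨r.2.1, r.2.2⟩, abs_of_nonpos (by linarith)]
      apply le_of_eq; ring
    · push_neg at hr
      by_cases hs : (s : ℝ) ≤ t
      · obtain ⟨hr1, hr2⟩ := hidx (r : ℝ) hr r.2.2
        have h1 : dist (τ s) (τ r) ≤
            dist (τ s) (γ' (m (idx (r : ℝ) + 1))) + dist (γ' (m (idx (r : ℝ) + 1))) (τ r) :=
          dist_triangle _ _ _
        have h2 : dist (τ s) (γ' (m (idx (r : ℝ) + 1))) = (m (idx (r : ℝ) + 1) - (s : ℝ)) * D := by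
          rw [hτle s hs, ← hcoe s, hγ'd _ _ ⟨s.2.1, s.2.2⟩ (hm01 _)]
          rw [abs_of_nonpos (by linarith [hmt (idx (r : ℝ) + 1)])]
          ring
        have h3 := (hpiece r hr).1
        calc dist (τ s) (τ r) ≤ _ := h1
          _ ≤ (m (idx (r : ℝ) + 1) - (s : ℝ)) * D + ((r : ℝ) - m (idx (r : ℝ) + 1)) * D := by
              rw [h2, h3]
          _ = ((r : ℝ) - (s : ℝ)) * D := by ring
      · push_neg at hs
        have htr : t < (r : ℝ) := lt_of_lt_of_le hs hsr
        obtain ⟨hs1, hs2⟩ := hidx (s : ℝ) hs s.2.2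
        by_cases hrn : (r : ℝ) ≤ m (idx (s : ℝ))
        · -- same piece
          have hidxr : idx (r : ℝ) = idx (s : ℝ) :=
            hidx_eq _ _ (lt_of_lt_of_le hs1 hsr) hrn
          have hL : 0 < m (idx (s : ℝ)) - m (idx (s : ℝ) + 1) :=
            by linarith [hmono (idx (s : ℝ))]
          have hτs := hτgt s hs
          have hτr := hτgt r htr
          rw [hidxr] at hτr
          have hpss : ((s:ℝ) - m (idx (s : ℝ) + 1)) / (m (idx (s : ℝ)) - m (idx (s : ℝ) + 1))
              ∈ Icc (0:ℝ) 1 :=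
            ⟨div_nonneg (by linarith) hL.le, by rw [div_le_one hL]; linarith⟩
          have hprr : ((r:ℝ) - m (idx (s : ℝ) + 1)) / (m (idx (s : ℝ)) - m (idx (s : ℝ) + 1))
              ∈ Icc (0:ℝ) 1 :=
            ⟨div_nonneg (by linarith [lt_of_lt_of_le hs1 hsr]) hL.le,
             by rw [div_le_one hL]; linarith⟩
          have hc1 : ((projIcc 0 1 zero_le_one
              (((s:ℝ) - m (idx (s : ℝ) + 1)) / (m (idx (s : ℝ)) - m (idx (s : ℝ) + 1)))) : ℝ)
              = ((s:ℝ) - m (idx (s : ℝ) + 1)) / (m (idx (s : ℝ)) - m (idx (s : ℝ) + 1)) := by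
            rw [projIcc_of_mem _ hpss]
          have hc2 : ((projIcc 0 1 zero_le_one
              (((r:ℝ) - m (idx (s : ℝ) + 1)) / (m (idx (s : ℝ)) - m (idx (s : ℝ) + 1)))) : ℝ)
              = ((r:ℝ) - m (idx (s : ℝ) + 1)) / (m (idx (s : ℝ)) - m (idx (s : ℝ) + 1)) := by
            rw [projIcc_of_mem _ hprr]
          rw [hτs, hτr, hδd _, hc1, hc2]
          have hsub : ((s:ℝ) - m (idx (s : ℝ) + 1)) / (m (idx (s : ℝ)) - m (idx (s : ℝ) + 1))
              - ((r:ℝ) - m (idx (s : ℝ) + 1)) / (m (idx (s : ℝ)) - m (idx (s : ℝ) + 1))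
              = ((s:ℝ) - r) / (m (idx (s : ℝ)) - m (idx (s : ℝ) + 1)) := by
            field_simp
            ring
          rw [hsub, abs_of_nonpos (div_nonpos_of_nonpos_of_nonneg (by linarith) hL.le)]
          apply le_of_eq
          field_simp
          ring
        · push_neg at hrn
          have h1 : dist (τ s) (τ r) ≤
              dist (τ s) (γ' (m (idx (s : ℝ)))) + dist (γ' (m (idx (s : ℝ)))) (τ r) :=
            dist_triangle _ _ _
          have h2 := (hpiece s hs).2
          have h3 := hC (idx (s : ℝ)) r (le_of_lt hrn)
          calc dist (τ s) (τ r) ≤ _ := h1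
            _ ≤ (m (idx (s : ℝ)) - (s : ℝ)) * D + ((r : ℝ) - m (idx (s : ℝ))) * D := by
                rw [h2]; linarith
            _ = ((r : ℝ) - (s : ℝ)) * D := by ring
  -- endpoints of τ
  have hτ0 : τ 0 = γ 0 := hτle 0 (by simp; linarith)
  have hτ1 : τ 1 = γ 1 := by
    rw [hτm 0 1 (by simp [hm0]), hm0]
    simpa using hcoe 1
  -- τ is a geodesic
  have hτgeo : IsGeodesic (γ 0) (γ 1) τ := by
    refine ⟨hτ0, hτ1, ?_⟩
    have key : ∀ s r : unitInterval, (s : ℝ) ≤ (r : ℝ) →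
        dist (τ s) (τ r) = ((r : ℝ) - (s : ℝ)) * D := by
      intro s r hsr
      refine le_antisymm (hup s r hsr) ?_
      have h0s : dist (τ 0) (τ s) ≤ ((s : ℝ) - ((0 : unitInterval) : ℝ)) * D :=
        hup 0 s (by simpa using s.2.1)
      have hr1' : dist (τ r) (τ 1) ≤ (((1 : unitInterval) : ℝ) - (r : ℝ)) * D :=
        hup r 1 (by simpa using r.2.2)
      have hz : ((0 : unitInterval) : ℝ) = 0 := by simp
      have ho : ((1 : unitInterval) : ℝ) = 1 := by simp
      rw [hz] at h0s
      rw [ho] at hr1'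
      have hchain : dist (τ 0) (τ 1) ≤
          dist (τ 0) (τ s) + dist (τ s) (τ r) + dist (τ r) (τ 1) := dist_triangle4 _ _ _ _
      have hDτ : dist (τ 0) (τ 1) = D := by rw [hτ0, hτ1, hD_def]
      rw [hDτ] at hchain
      nlinarith [hchain, h0s, hr1']
    intro a b
    rcases le_total (a : ℝ) (b : ℝ) with hab | hab
    · rw [key a b hab, abs_of_nonpos (by linarith), ← hD_def]
      ring
    · rw [dist_comm, key b a hab, abs_of_nonneg (by linarith), ← hD_def]
  -- the disagreement points
  refine ⟨τ, hτgeo, ?_⟩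
  obtain ⟨A, hA⟩ : ∃ A : Set ℝ,
      A = Subtype.val '' {s : unitInterval | 0 < (s : ℝ) ∧ (s : ℝ) < 1 ∧ τ s ≠ γ s} := ⟨_, rfl⟩
  rw [← hA]
  have hlb : ∀ a ∈ A, t ≤ a := by
    rw [hA]
    rintro a ⟨s, ⟨_, _, hsne⟩, rfl⟩
    by_contra hc
    push_neg at hc
    exact hsne (hτle s (le_of_lt hc))
  -- for each n there is a disagreement point in (m (n+1), m n)
  have hpt : ∀ n : ℕ, ∃ a ∈ A, a < m n := by
    intro n
    have hL : 0 < m n - m (n + 1) := by linarith [hmono n]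
    obtain ⟨p, hpdef⟩ : ∃ p : ℝ, p = (s₀ n : ℝ) := ⟨_, rfl⟩
    have hp0 : 0 ≤ p := hpdef ▸ (s₀ n).2.1
    have hp1 : p ≤ 1 := hpdef ▸ (s₀ n).2.2
    have hp0' : 0 < p := by
      rcases lt_or_eq_of_le hp0 with h | h
      · exact h
      · exfalso
        apply hs₀ n
        have hz : s₀ n = 0 := by
          apply Subtype.ext
          rw [← hpdef, ← h]
          simp
        rw [hz, (hδ n).1]
        congr 1
        simp
    have hp1' : p < 1 := by
      rcases lt_or_eq_of_le hp1 with h | h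
      · exact h
      · exfalso
        apply hs₀ n
        have hz : s₀ n = 1 := by
          apply Subtype.ext
          rw [← hpdef, h]
          simp
        rw [hz, (hδ n).2.1]
        congr 1
        simp
    obtain ⟨y, hydef⟩ : ∃ y : ℝ, y = m (n + 1) + p * (m n - m (n + 1)) := ⟨_, rfl⟩
    have hy1 : m (n + 1) < y := by rw [hydef]; nlinarith
    have hy2 : y < m n := by rw [hydef]; nlinarith
    have hy0 : 0 < y := lt_trans (lt_trans ht0 (hmt (n+1))) hy1
    have hy3 : y < 1 := lt_of_lt_of_le hy2 (hm1 n)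
    have hymem : y ∈ Icc (0:ℝ) 1 := ⟨hy0.le, hy3.le⟩
    have hty : t < y := lt_trans (hmt (n+1)) hy1
    have hidxy : idx y = n := hidx_eq n y hy1 hy2.le
    have hratio : (y - m (n + 1)) / (m n - m (n + 1)) = p := by
      rw [hydef]; field_simp
      ring
    have h1 : τ ⟨y, hymem⟩ = δ (idx y) (projIcc 0 1 zero_le_one
        ((y - m (idx y + 1)) / (m (idx y) - m (idx y + 1)))) := hτgt ⟨y, hymem⟩ hty
    rw [hidxy, hratio, projIcc_of_mem _ (⟨hp0, hp1⟩ : p ∈ Icc (0:ℝ) 1)] at h1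
    have hps : (⟨p, ⟨hp0, hp1⟩⟩ : unitInterval) = s₀ n := Subtype.ext hpdef
    rw [hps] at h1
    have hγy : γ' y = γ ⟨y, hymem⟩ := hcoe ⟨y, hymem⟩
    have hneq : τ ⟨y, hymem⟩ ≠ γ ⟨y, hymem⟩ := by
      rw [h1, ← hγy, hydef, hpdef]
      exact hs₀ n
    refine ⟨y, ?_, hy2⟩
    rw [hA]
    exact ⟨⟨y, hymem⟩, ⟨hy0, hy3, hneq⟩, rfl⟩
  have hAne : A.Nonempty := by
    obtain ⟨a, ha, _⟩ := hpt 0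
    exact ⟨a, ha⟩
  have hAbdd : BddBelow A := ⟨t, hlb⟩
  refine le_antisymm ?_ (le_csInf hAne hlb)
  by_contra hc
  push_neg at hc
  obtain ⟨n, hn⟩ := exists_pow_lt_of_lt_one (show (0:ℝ) < sInf A - t by linarith)
    (show (1:ℝ)/2 < 1 by norm_num)
  have hmn : m n < sInf A := by
    have h1 : (1 - t) / 2 ^ n ≤ ((1:ℝ)/2) ^ n := by
      rw [div_pow, one_pow]
      gcongr
      linarith
    simp only [hmdef]
    linarith
  obtain ⟨a, haA, han⟩ := hpt n
  have hle := csInf_le hAbdd haA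
  linarith
end

section
/- Let (X, d) be a multigeodesic metric space and let u, v ∈ X be distinct. Then the set of geodesics from u to v is uncountable. -/
open Set

namespace Statement14Aux

/-- the dyadic scale `2⁻ⁿ` -/
noncomputable def c (n : ℕ) : ℝ := (2 : ℝ)⁻¹ ^ n

lemma c_pos (n : ℕ) : 0 < c n := by unfold c; positivity

lemma c_succ (n : ℕ) : c (n + 1) = c n / 2 := by
  simp [c, pow_succ]; ring

lemma c_zero : c 0 = 1 := by simp [c]

lemma c_lt (n : ℕ) : c (n + 1) < c n := by
  rw [c_succ]; linarith [c_pos n]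

lemma c_anti {m n : ℕ} (h : m ≤ n) : c n ≤ c m :=
  pow_le_pow_of_le_one (by norm_num) (by norm_num) h

lemma c_le_one (n : ℕ) : c n ≤ 1 := by simpa [c_zero] using c_anti (Nat.zero_le n)

lemma c_mul_pow (n : ℕ) : c n * 2 ^ n = 1 := by
  simp only [c, inv_pow]
  rw [inv_mul_cancel₀ (by positivity)]

lemma c_mul_pow_succ (n : ℕ) : c n * 2 ^ (n + 1) = 2 := by
  rw [pow_succ, ← mul_assoc, c_mul_pow]; ring

/-- the dyadic points as elements of the unit interval -/
noncomputable def tn (n : ℕ) : unitInterval := ⟨c n, (c_pos n).le, c_le_one n⟩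

lemma exists_idx {t : ℝ} (ht : 0 < t) (ht1 : t ≤ 1) : ∃ n, c (n + 1) < t ∧ t ≤ c n := by
  classical
  have hex : ∃ n, c n < t := by
    obtain ⟨n, hn⟩ := exists_pow_lt_of_lt_one ht (by norm_num : (2 : ℝ)⁻¹ < 1)
    exact ⟨n, hn⟩
  have hfind := Nat.find_spec hex
  rcases Nat.eq_zero_or_eq_succ_pred (Nat.find hex) with h0 | hs
  · rw [h0, c_zero] at hfind
    linarith
  · set m := Nat.find hex - 1 with hm
    refine ⟨m, ?_, ?_⟩
    · rw [hs] at hfind; exact hfind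
    · have h2 := Nat.find_min hex (m := m) (by omega)
      linarith [not_lt.mp h2]

lemma idx_unique {t : ℝ} {n m : ℕ} (h1 : c (n + 1) < t) (h2 : t ≤ c n)
    (h3 : c (m + 1) < t) (h4 : t ≤ c m) : n = m := by
  by_contra hne
  rcases Nat.lt_or_ge n m with h | h
  · have : c m ≤ c (n + 1) := c_anti h
    linarith
  · have : c n ≤ c (m + 1) := c_anti (by omega)
    linarith

/-- the affine reparametrization of the dyadic interval `[c (n+1), c n]` onto `[0,1]` -/
noncomputable def pr (n : ℕ) (r : ℝ) : unitInterval :=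
  projIcc 0 1 zero_le_one (r * 2 ^ (n + 1) - 1)

lemma pr_coe (n : ℕ) {r : ℝ} (h1 : c (n + 1) ≤ r) (h2 : r ≤ c n) :
    ((pr n r : ℝ)) = r * 2 ^ (n + 1) - 1 := by
  have hp : (0 : ℝ) < 2 ^ (n + 1) := by positivity
  have p1 := c_mul_pow (n + 1)
  have p2 := c_mul_pow_succ n
  have hm : r * 2 ^ (n + 1) - 1 ∈ Icc (0 : ℝ) 1 := by
    constructor
    · nlinarith [mul_le_mul_of_nonneg_right h1 hp.le]
    · nlinarith [mul_le_mul_of_nonneg_right h2 hp.le]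
  rw [pr, projIcc_of_mem zero_le_one hm]

lemma pr_left (n : ℕ) : pr n (c (n + 1)) = 0 := by
  apply Subtype.ext
  rw [pr_coe n le_rfl (c_lt n).le, c_mul_pow (n + 1)]
  norm_num

lemma pr_right (n : ℕ) : pr n (c n) = 1 := by
  apply Subtype.ext
  rw [pr_coe n (c_lt n).le le_rfl, c_mul_pow_succ n]
  norm_num

/-- the splicing of a sequence of pieces along dyadic intervals -/
noncomputable def splice {X : Type*} (u : X) (pc : ℕ → unitInterval → X)
    (t : unitInterval) : X := by
  classical
  exact if h : ∃ n, c (n + 1) < (t : ℝ) ∧ (t : ℝ) ≤ c n then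
    pc (Nat.find h) (pr (Nat.find h) (t : ℝ))
  else u

lemma splice_eval {X : Type*} (u : X) (pc : ℕ → unitInterval → X) {t : unitInterval}
    {n : ℕ} (h1 : c (n + 1) < (t : ℝ)) (h2 : (t : ℝ) ≤ c n) :
    splice u pc t = pc n (pr n (t : ℝ)) := by
  classical
  have h : ∃ n, c (n + 1) < (t : ℝ) ∧ (t : ℝ) ≤ c n := ⟨n, h1, h2⟩
  have hn : Nat.find h = n :=
    idx_unique (Nat.find_spec h).1 (Nat.find_spec h).2 h1 h2
  simp only [splice, dif_pos h, hn]

lemma splice_zero {X : Type*} (u : X) (pc : ℕ → unitInterval → X) :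
    splice u pc 0 = u := by
  classical
  have h : ¬ ∃ n, c (n + 1) < ((0 : unitInterval) : ℝ) ∧ ((0 : unitInterval) : ℝ) ≤ c n := by
    rintro ⟨n, hn, -⟩
    simp only [Icc.coe_zero] at hn
    linarith [c_pos (n + 1)]
  simp only [splice, dif_neg h]

end Statement14Aux

open Statement14Aux

theorem statement14 {X : Type*} [MetricSpace X] (hX : Multigeodesic X)
    (u v : X) (huv : u ≠ v) :
    ¬ {γ : unitInterval → X | IsGeodesic u v γ}.Countable := by
  intro hC
  set D := dist u v with hD
  have hD0 : 0 < D := dist_pos.mpr huv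
  obtain ⟨γ, -, hγ, -, -⟩ := hX u v huv
  obtain ⟨hγ0, hγ1, hγd⟩ := hγ
  -- the points γ(2^{-(n+1)}) and γ(2^{-n}) are distinct
  have hdAB : ∀ n, dist (γ (tn (n + 1))) (γ (tn n)) = c (n + 1) * D := by
    intro n
    rw [hγd (tn (n + 1)) (tn n)]
    have : |(tn (n + 1) : ℝ) - (tn n : ℝ)| = c (n + 1) := by
      have h1 := c_lt n
      have h2 := c_succ n
      have h3 := c_pos (n + 1)
      rw [show ((tn (n + 1) : ℝ)) = c (n + 1) from rfl, show ((tn n : ℝ)) = c n from rfl,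
        abs_of_nonpos (by linarith)]
      linarith
    rw [this]
  have hPne : ∀ n, γ (tn (n + 1)) ≠ γ (tn n) := by
    intro n h
    have h2 := hdAB n
    rw [h, dist_self] at h2
    nlinarith [c_pos (n + 1)]
  -- choose, for each n, two distinct geodesics between these points
  have hAB : ∀ n, ∃ A B : unitInterval → X,
      IsGeodesic (γ (tn (n + 1))) (γ (tn n)) A ∧
      IsGeodesic (γ (tn (n + 1))) (γ (tn n)) B ∧ A ≠ B := fun n => hX _ _ (hPne n)
  choose A B hA hB hABne using hAB
  set pc : (ℕ → Bool) → ℕ → unitInterval → X :=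
    fun ε n => if ε n then A n else B n with hpcdef
  have hpc : ∀ ε n, IsGeodesic (γ (tn (n + 1))) (γ (tn n)) (pc ε n) := by
    intro ε n
    by_cases h : ε n <;> simp [hpcdef, h, hA n, hB n]
  set F : (ℕ → Bool) → unitInterval → X := fun ε => splice u (pc ε) with hFdef
  -- within-piece distances
  have hW : ∀ ε n (r₁ r₂ : ℝ), c (n + 1) ≤ r₁ → r₁ ≤ c n → c (n + 1) ≤ r₂ → r₂ ≤ c n →
      dist (pc ε n (pr n r₁)) (pc ε n (pr n r₂)) = |r₁ - r₂| * D := by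
    intro ε n r₁ r₂ h1 h2 h3 h4
    rw [(hpc ε n).2.2 (pr n r₁) (pr n r₂), hdAB n, pr_coe n h1 h2, pr_coe n h3 h4]
    have : (r₁ * 2 ^ (n + 1) - 1) - (r₂ * 2 ^ (n + 1) - 1) = (r₁ - r₂) * 2 ^ (n + 1) := by
      ring
    rw [this, abs_mul, abs_of_nonneg (by positivity : (0:ℝ) ≤ (2:ℝ) ^ (n + 1))]
    linear_combination (|r₁ - r₂| * D) * c_mul_pow (n + 1)
  have hend_left : ∀ ε n, pc ε n (pr n (c (n + 1))) = γ (tn (n + 1)) := by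
    intro ε n; rw [pr_left n, (hpc ε n).1]
  have hend_right : ∀ ε n, pc ε n (pr n (c n)) = γ (tn n) := by
    intro ε n; rw [pr_right n, (hpc ε n).2.1]
  -- distance from u
  have hU : ∀ ε (t : unitInterval), dist u (F ε t) = (t : ℝ) * D := by
    intro ε t
    rcases eq_or_lt_of_le t.2.1 with h0 | h0
    · have : t = 0 := Subtype.ext h0.symm
      rw [this, hFdef]
      simp [splice_zero u (pc ε)]
    · obtain ⟨n, h1, h2⟩ := exists_idx h0 t.2.2
      rw [hFdef]
      simp only
      rw [splice_eval u (pc ε) h1 h2]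
      have hdu1 : dist u (γ (tn (n + 1))) = c (n + 1) * D := by
        rw [← hγ0, hγd]
        have habs : |((0 : unitInterval) : ℝ) - ((tn (n + 1)) : ℝ)| = c (n + 1) := by
          rw [Icc.coe_zero, show ((tn (n + 1)) : ℝ) = c (n + 1) from rfl,
            abs_of_nonpos (by linarith [c_pos (n + 1)])]
          ring
        rw [habs, ← hD]
      have hdu2 : dist u (γ (tn n)) = c n * D := by
        rw [← hγ0, hγd]
        have habs : |((0 : unitInterval) : ℝ) - ((tn n) : ℝ)| = c n := by
          rw [Icc.coe_zero, show ((tn n) : ℝ) = c n from rfl,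
            abs_of_nonpos (by linarith [c_pos n])]
          ring
        rw [habs, ← hD]
      have hL : dist (γ (tn (n + 1))) (pc ε n (pr n (t : ℝ))) = ((t : ℝ) - c (n + 1)) * D := by
        rw [← hend_left ε n, hW ε n _ _ le_rfl (c_lt n).le h1.le h2,
          abs_of_nonpos (by linarith)]
        ring
      have hR : dist (pc ε n (pr n (t : ℝ))) (γ (tn n)) = (c n - (t : ℝ)) * D := by
        rw [← hend_right ε n, hW ε n _ _ h1.le h2 (c_lt n).le le_rfl,
          abs_of_nonpos (by linarith)]
        ring
      have hup : dist u (pc ε n (pr n (t : ℝ))) ≤ (t : ℝ) * D := by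
        calc dist u (pc ε n (pr n (t : ℝ)))
            ≤ dist u (γ (tn (n + 1))) + dist (γ (tn (n + 1))) (pc ε n (pr n (t : ℝ))) :=
              dist_triangle _ _ _
          _ = (t : ℝ) * D := by rw [hdu1, hL]; ring
      have hlo : (t : ℝ) * D ≤ dist u (pc ε n (pr n (t : ℝ))) := by
        have := dist_triangle u (pc ε n (pr n (t : ℝ))) (γ (tn n))
        rw [hdu2, hR] at this
        linarith
      linarith
  -- F maps dyadic points to the corresponding points of γ
  -- F ε is a geodesic
  have hG : ∀ ε, IsGeodesic u v (F ε) := by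
    intro ε
    have key : ∀ s t : unitInterval, (s : ℝ) ≤ (t : ℝ) →
        dist (F ε s) (F ε t) = ((t : ℝ) - (s : ℝ)) * D := by
      intro s t hst
      have hlo : ((t : ℝ) - (s : ℝ)) * D ≤ dist (F ε s) (F ε t) := by
        have h1 := dist_triangle u (F ε s) (F ε t)
        rw [hU ε s, hU ε t] at *
        nlinarith [hU ε t, hU ε s, dist_triangle u (F ε s) (F ε t)]
      have hup : dist (F ε s) (F ε t) ≤ ((t : ℝ) - (s : ℝ)) * D := by
        rcases eq_or_lt_of_le s.2.1 with h0 | h0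
        · have hs0 : s = 0 := Subtype.ext h0.symm
          rw [hs0, hFdef]
          simp only
          rw [splice_zero u (pc ε)]
          have := hU ε t
          rw [hFdef] at this
          rw [this]
          simp
        · obtain ⟨n₁, hs1, hs2⟩ := exists_idx h0 s.2.2
          obtain ⟨n₂, ht1, ht2⟩ := exists_idx (lt_of_lt_of_le h0 hst) t.2.2
          have hFs : F ε s = pc ε n₁ (pr n₁ (s : ℝ)) := splice_eval u (pc ε) hs1 hs2
          have hFt : F ε t = pc ε n₂ (pr n₂ (t : ℝ)) := splice_eval u (pc ε) ht1 ht2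
          have hn : n₂ ≤ n₁ := by
            by_contra h
            have : c n₂ ≤ c (n₁ + 1) := c_anti (by omega)
            linarith
          rcases eq_or_lt_of_le hn with heq | hlt
          · rw [hFs, hFt, heq]
            rw [hW ε n₁ _ _ hs1.le hs2 (heq ▸ ht1.le) (heq ▸ ht2)]
            rw [abs_of_nonpos (by linarith)]
            linarith
          · -- chain through γ(tn n₁) and γ(tn (n₂ + 1))
            have hc1 : dist (F ε s) (γ (tn n₁)) = (c n₁ - (s : ℝ)) * D := by
              rw [hFs, ← hend_right ε n₁,
                hW ε n₁ _ _ hs1.le hs2 (c_lt n₁).le le_rfl,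
                abs_of_nonpos (by linarith)]
              ring
            have hc2 : dist (γ (tn n₁)) (γ (tn (n₂ + 1))) = (c (n₂ + 1) - c n₁) * D := by
              rw [hγd]
              have hcc : c n₁ ≤ c (n₂ + 1) := c_anti (by omega)
              rw [show ((tn n₁ : ℝ)) = c n₁ from rfl,
                show ((tn (n₂ + 1) : ℝ)) = c (n₂ + 1) from rfl,
                abs_of_nonpos (by linarith)]
              ring
            have hc3 : dist (γ (tn (n₂ + 1))) (F ε t) = ((t : ℝ) - c (n₂ + 1)) * D := by
              rw [hFt, ← hend_left ε n₂,
                hW ε n₂ _ _ le_rfl (c_lt n₂).le ht1.le ht2,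
                abs_of_nonpos (by linarith)]
              ring
            calc dist (F ε s) (F ε t)
                ≤ dist (F ε s) (γ (tn n₁)) + dist (γ (tn n₁)) (F ε t) := dist_triangle _ _ _
              _ ≤ dist (F ε s) (γ (tn n₁)) +
                    (dist (γ (tn n₁)) (γ (tn (n₂ + 1))) + dist (γ (tn (n₂ + 1))) (F ε t)) := by
                  linarith [dist_triangle (γ (tn n₁)) (γ (tn (n₂ + 1))) (F ε t)]
              _ = ((t : ℝ) - (s : ℝ)) * D := by rw [hc1, hc2, hc3]; ring
      linarith
    refine ⟨splice_zero u (pc ε), ?_, ?_⟩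
    · have h1 : ((1 : unitInterval) : ℝ) = c 0 := by rw [c_zero]; rfl
      have := splice_eval u (pc ε) (t := 1) (n := 0) (by rw [h1]; exact c_lt 0)
        (by rw [h1])
      rw [hFdef] at *
      simp only at this ⊢
      rw [this]
      have h2 : pr 0 ((1 : unitInterval) : ℝ) = pr 0 (c 0) := by rw [h1]
      rw [h2, hend_right ε 0]
      have h3 : tn 0 = 1 := Subtype.ext c_zero
      rw [h3, hγ1]
    · intro s t
      rcases le_total (s : ℝ) (t : ℝ) with h | h
      · rw [key s t h, abs_of_nonpos (by linarith)]
        ring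
      · rw [dist_comm, key t s h, abs_of_nonneg (by linarith)]
  -- injectivity of F
  have hinj : Function.Injective F := by
    intro ε ε' h
    by_contra hne
    obtain ⟨n, hn⟩ := Function.ne_iff.mp hne
    obtain ⟨s₀, hs₀⟩ := Function.ne_iff.mp (hABne n)
    have hs00 : (s₀ : ℝ) ≠ 0 := by
      intro h0
      have : s₀ = 0 := Subtype.ext h0
      rw [this, (hA n).1, (hB n).1] at hs₀
      exact hs₀ rfl
    have hs0pos : 0 < (s₀ : ℝ) := lt_of_le_of_ne s₀.2.1 (Ne.symm hs00)
    set r : ℝ := ((s₀ : ℝ) + 1) * c (n + 1) with hr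
    have hrmem : r ∈ Icc (0 : ℝ) 1 := by
      constructor
      · have := c_pos (n + 1)
        nlinarith
      · have h1 : r ≤ 2 * c (n + 1) := by nlinarith [c_pos (n + 1), s₀.2.2]
        have h2 : 2 * c (n + 1) = c n := by rw [c_succ n]; ring
        linarith [c_le_one n]
    set t : unitInterval := ⟨r, hrmem⟩ with ht
    have hb1 : c (n + 1) < (t : ℝ) := by
      rw [ht]
      simp only
      nlinarith [c_pos (n + 1)]
    have hb2 : (t : ℝ) ≤ c n := by
      rw [ht]
      simp only
      have h2 : 2 * c (n + 1) = c n := by rw [c_succ n]; ring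
      nlinarith [c_pos (n + 1), s₀.2.2]
    have hprt : pr n (t : ℝ) = s₀ := by
      apply Subtype.ext
      rw [pr_coe n hb1.le hb2]
      have := c_mul_pow (n + 1)
      rw [ht]
      simp only
      rw [hr]
      nlinarith [c_mul_pow (n + 1)]
    have he1 : F ε t = pc ε n s₀ := by
      rw [hFdef]; simp only
      rw [splice_eval u (pc ε) hb1 hb2, hprt]
    have he2 : F ε' t = pc ε' n s₀ := by
      rw [hFdef]; simp only
      rw [splice_eval u (pc ε') hb1 hb2, hprt]
    have heq : pc ε n s₀ = pc ε' n s₀ := by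
      rw [← he1, ← he2, h]
    have : A n s₀ = B n s₀ ∨ B n s₀ = A n s₀ := by
      rcases Bool.eq_false_or_eq_true (ε n) with h1 | h1 <;>
        rcases Bool.eq_false_or_eq_true (ε' n) with h2 | h2 <;>
        · first
          | (exact absurd (h1.trans h2.symm) hn)
          | (simp only [hpcdef, h1, h2] at heq; simp at heq; tauto)
    rcases this with h' | h'
    · exact hs₀ h'
    · exact hs₀ h'.symm
  -- conclude: (ℕ → Bool) would be countable
  have hmem : ∀ ε, F ε ∈ {γ : unitInterval → X | IsGeodesic u v γ} := fun ε => hG ε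
  have h2 : Countable ↥{γ : unitInterval → X | IsGeodesic u v γ} := hC.to_subtype
  have h3 : Countable (ℕ → Bool) := by
    have : Function.Injective
        (fun ε => (⟨F ε, hmem ε⟩ : {γ : unitInterval → X | IsGeodesic u v γ})) := by
      intro a b hab
      exact hinj (congrArg Subtype.val hab)
    exact this.countable
  have h4 : Countable (Set ℕ) :=
    Countable.of_equiv _ ((Equiv.arrowCongr (Equiv.refl ℕ) Equiv.propEquivBool).symm)
  obtain ⟨f, hf⟩ := h4.exists_injective_nat
  exact Function.cantor_injective f hf
end

section
/- Let (X, d) be a multigeodesic metric space. Then every geodesic γ : [0,1] → X between distinct points branches at every time t ∈ (0,1); that is, for every t ∈ (0,1) there exists a geodesic σ : [0,1] → X from γ(0) to γ(1) such that inf{ s ∈ (0,1) : σ(s) ≠ γ(s) } = t. -/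
open Set Filter Topology

/-- In a multigeodesic space, given any map `γ0` between two distinct points
there is a geodesic between them different from `γ0`. -/
lemma exists_ne_geodesic' {X : Type*} [MetricSpace X] (hX : Multigeodesic X)
    {u v : X} (h : u ≠ v) (γ0 : unitInterval → X) :
    ∃ τ : unitInterval → X, IsGeodesic u v τ ∧ τ ≠ γ0 := by
  obtain ⟨α, β, hα, hβ, hne⟩ := hX u v h
  by_cases hc : α = γ0
  · exact ⟨β, hβ, fun h' => hne (hc.trans h'.symm)⟩
  · exact ⟨α, hα, hc⟩

theorem statement15 {X : Type*} [MetricSpace X] (hX : Multigeodesic X) :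
    ∀ γ : unitInterval → X, IsGeodesic (γ 0) (γ 1) γ → γ 0 ≠ γ 1 →
      ∀ t ∈ Set.Ioo (0 : ℝ) 1,
        ∃ σ : unitInterval → X, IsGeodesic (γ 0) (γ 1) σ ∧
          sInf (Subtype.val ''
            {s : unitInterval | 0 < (s : ℝ) ∧ (s : ℝ) < 1 ∧ σ s ≠ γ s}) = t := by
  intro γ hγ hne t ht
  obtain ⟨ht0, ht1⟩ := ht
  set D := dist (γ 0) (γ 1) with hD
  have hDpos : 0 < D := dist_pos.2 hne
  have hdist := hγ.2.2
  -- the clamping map ℝ → [0,1]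
  set ι : ℝ → unitInterval := fun x => Set.projIcc 0 1 zero_le_one x with hιdef
  have hι : ∀ x, x ∈ Set.Icc (0:ℝ) 1 → ((ι x : ℝ)) = x := by
    intro x hx
    simp only [hιdef]
    rw [Set.projIcc_of_mem zero_le_one hx]
  have hγd : ∀ x y, x ∈ Set.Icc (0:ℝ) 1 → y ∈ Set.Icc (0:ℝ) 1 →
      dist (γ (ι x)) (γ (ι y)) = |x - y| * D := by
    intro x y hx hy
    rw [hdist, hι x hx, hι y hy]
  have hγne : ∀ x y, x ∈ Set.Icc (0:ℝ) 1 → y ∈ Set.Icc (0:ℝ) 1 → x ≠ y →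
      γ (ι x) ≠ γ (ι y) := by
    intro x y hx hy hxy heq
    have h0 := hγd x y hx hy
    rw [heq, dist_self] at h0
    have h1 : 0 < |x - y| := abs_pos.2 (sub_ne_zero.2 hxy)
    nlinarith
  -- the dyadic sequence decreasing to t
  set a : ℕ → ℝ := fun n => t + (1 - t) * (2⁻¹ : ℝ) ^ n with hadef
  have h1t : 0 < 1 - t := by linarith
  have hagt : ∀ n, t < a n := by
    intro n
    have hp : (0:ℝ) < (2⁻¹:ℝ) ^ n := by positivity
    simp only [hadef]
    nlinarith
  have hale : ∀ n, a n ≤ 1 := by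
    intro n
    have hp : (2⁻¹:ℝ) ^ n ≤ 1 := pow_le_one₀ (by norm_num) (by norm_num)
    simp only [hadef]
    nlinarith
  have hanti : ∀ n, a (n+1) < a n := by
    intro n
    have hp : (0:ℝ) < (2⁻¹:ℝ) ^ n := by positivity
    have hs : (2⁻¹:ℝ) ^ (n+1) = (2⁻¹:ℝ) ^ n * 2⁻¹ := pow_succ _ _
    simp only [hadef, hs]
    nlinarith
  have hSA : StrictAnti a := strictAnti_nat_of_succ_lt hanti
  have hamem : ∀ n, a n ∈ Set.Icc (0:ℝ) 1 := fun n => ⟨by linarith [hagt n], hale n⟩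
  have ha0 : a 0 = 1 := by simp [hadef]
  have hatend : Tendsto a atTop (nhds t) := by
    have h2 : Tendsto (fun n : ℕ => ((2:ℝ)⁻¹)^n) atTop (nhds 0) :=
      tendsto_pow_atTop_nhds_zero_of_lt_one (by norm_num) (by norm_num)
    have h3 := (h2.const_mul (1 - t)).const_add t
    simpa [hadef] using h3
  have hbranch : ∀ s : unitInterval, t < (s:ℝ) → ∃ n, a (n+1) < (s:ℝ) := by
    intro s hs
    obtain ⟨n, hn⟩ := (hatend.eventually (Iio_mem_nhds hs)).exists
    exact ⟨n, (hanti n).trans hn⟩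
  have hfindspec : ∀ (s : unitInterval) (hs : t < (s:ℝ)),
      a (Nat.find (hbranch s hs) + 1) < (s:ℝ) ∧ (s:ℝ) ≤ a (Nat.find (hbranch s hs)) := by
    intro s hs
    refine ⟨Nat.find_spec (hbranch s hs), ?_⟩
    rcases Nat.eq_zero_or_pos (Nat.find (hbranch s hs)) with h0 | hpos
    · rw [h0, ha0]; exact s.2.2
    · have hmin := Nat.find_min (hbranch s hs) (Nat.sub_lt hpos one_pos)
      have he : Nat.find (hbranch s hs) - 1 + 1 = Nat.find (hbranch s hs) := by omega
      rw [he] at hmin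
      exact not_lt.1 hmin
  have hfind' : ∀ s : unitInterval, t < (s:ℝ) →
      ∃ n, a (n+1) < (s:ℝ) ∧ (s:ℝ) ≤ a n := fun s hs => ⟨_, hfindspec s hs⟩
  have huniq : ∀ (x : ℝ) (n m : ℕ), a (n+1) < x → x ≤ a n → a (m+1) < x → x ≤ a m →
      n = m := by
    intro x n m h1 h2 h3 h4
    by_contra hnm
    rcases Nat.lt_or_ge n m with h | h
    · have : a m ≤ a (n+1) := hSA.antitone (Nat.succ_le_of_lt h)
      linarith
    · have hlt : m < n := lt_of_le_of_ne h (Ne.symm hnm)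
      have : a n ≤ a (m+1) := hSA.antitone (Nat.succ_le_of_lt hlt)
      linarith
  have hΔ : ∀ n, 0 < a n - a (n+1) := fun n => sub_pos.2 (hanti n)
  have hpq : ∀ n, γ (ι (a (n+1))) ≠ γ (ι (a n)) :=
    fun n => hγne _ _ (hamem _) (hamem _) (ne_of_lt (hanti n))
  have hpqdist : ∀ n, dist (γ (ι (a (n+1)))) (γ (ι (a n))) = (a n - a (n+1)) * D := by
    intro n
    rw [hγd _ _ (hamem _) (hamem _), abs_of_nonpos (by linarith [hanti n])]
    ring
  -- the "restricted γ" on each interval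
  set γres : ℕ → unitInterval → X :=
    fun n r => γ (ι (a (n+1) + (r:ℝ) * (a n - a (n+1)))) with hγresdef
  have hγres0 : ∀ n, γres n 0 = γ (ι (a (n+1))) := by
    intro n
    simp only [hγresdef]
    norm_num
  have hγres1 : ∀ n, γres n 1 = γ (ι (a n)) := by
    intro n
    simp only [hγresdef]
    have h1 : a (n+1) + ((1:unitInterval):ℝ) * (a n - a (n+1)) = a n := by norm_num
    rw [h1]
  -- choose a different geodesic on each interval
  have hτex : ∀ n, ∃ τn : unitInterval → X,
      IsGeodesic (γ (ι (a (n+1)))) (γ (ι (a n))) τn ∧ τn ≠ γres n :=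
    fun n => exists_ne_geodesic' hX (hpq n) (γres n)
  choose τ hτgeo hτne using hτex
  have hτ0 : ∀ n, τ n 0 = γ (ι (a (n+1))) := fun n => (hτgeo n).1
  have hτ1 : ∀ n, τ n 1 = γ (ι (a n)) := fun n => (hτgeo n).2.1
  have hτd : ∀ n (r r' : unitInterval),
      dist (τ n r) (τ n r') = |(r:ℝ) - (r':ℝ)| * ((a n - a (n+1)) * D) := by
    intro n r r'
    rw [(hτgeo n).2.2, hpqdist]
  -- define σ
  set σ : unitInterval → X := fun s =>
    if h : (s:ℝ) ≤ t then γ s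
    else τ (Nat.find (hbranch s (not_le.1 h)))
      (ι (((s:ℝ) - a (Nat.find (hbranch s (not_le.1 h)) + 1)) /
          (a (Nat.find (hbranch s (not_le.1 h))) -
           a (Nat.find (hbranch s (not_le.1 h)) + 1)))) with hσdef
  have hσle : ∀ s : unitInterval, (s:ℝ) ≤ t → σ s = γ s := by
    intro s hs
    simp only [hσdef, dif_pos hs]
  have hσmem : ∀ (s : unitInterval) n, a (n+1) < (s:ℝ) → (s:ℝ) ≤ a n →
      ((s:ℝ) - a (n+1)) / (a n - a (n+1)) ∈ Set.Icc (0:ℝ) 1 := by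
    intro s n h1 h2
    constructor
    · apply div_nonneg (by linarith) (by linarith [hΔ n])
    · rw [div_le_one (hΔ n)]; linarith
  have hσbr : ∀ (s : unitInterval) n, a (n+1) < (s:ℝ) → (s:ℝ) ≤ a n →
      σ s = τ n (ι (((s:ℝ) - a (n+1)) / (a n - a (n+1)))) := by
    intro s n h1 h2
    have hs : t < (s:ℝ) := (hagt (n+1)).trans h1
    have hnle : ¬ (s:ℝ) ≤ t := not_le.2 hs
    simp only [hσdef, dif_neg hnle]
    obtain ⟨hf1, hf2⟩ := hfindspec s (not_le.1 hnle)
    have heq : Nat.find (hbranch s (not_le.1 hnle)) = n := huniq (s:ℝ) _ n hf1 hf2 h1 h2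
    rw [heq]
  -- key distance computations
  have hd1 : ∀ (s : unitInterval) n, a (n+1) < (s:ℝ) → (s:ℝ) ≤ a n →
      dist (σ s) (γ (ι (a (n+1)))) = ((s:ℝ) - a (n+1)) * D := by
    intro s n h1 h2
    rw [hσbr s n h1 h2, ← hτ0 n, hτd]
    rw [hι _ (hσmem s n h1 h2)]
    have h0 : ((0:unitInterval):ℝ) = 0 := rfl
    rw [h0, sub_zero, abs_of_nonneg (hσmem s n h1 h2).1]
    have hΔne : a n - a (n+1) ≠ 0 := ne_of_gt (hΔ n)
    field_simp
  have hd2 : ∀ (s : unitInterval) n, a (n+1) < (s:ℝ) → (s:ℝ) ≤ a n →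
      dist (σ s) (γ (ι (a n))) = (a n - (s:ℝ)) * D := by
    intro s n h1 h2
    rw [hσbr s n h1 h2, ← hτ1 n, hτd]
    rw [hι _ (hσmem s n h1 h2)]
    have h0 : ((1:unitInterval):ℝ) = 1 := rfl
    rw [h0]
    have hnp : ((s:ℝ) - a (n+1)) / (a n - a (n+1)) - 1 ≤ 0 := by
      have := (hσmem s n h1 h2).2; linarith
    rw [abs_of_nonpos hnp]
    have hΔne : a n - a (n+1) ≠ 0 := ne_of_gt (hΔ n)
    field_simp
    ring
  have hd3 : ∀ (s s' : unitInterval) n, a (n+1) < (s:ℝ) → (s:ℝ) ≤ a n →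
      a (n+1) < (s':ℝ) → (s':ℝ) ≤ a n →
      dist (σ s) (σ s') = |(s:ℝ) - (s':ℝ)| * D := by
    intro s s' n h1 h2 h3 h4
    rw [hσbr s n h1 h2, hσbr s' n h3 h4, hτd]
    rw [hι _ (hσmem s n h1 h2), hι _ (hσmem s' n h3 h4)]
    rw [div_sub_div_same, abs_div, abs_of_pos (hΔ n)]
    have hΔne : a n - a (n+1) ≠ 0 := ne_of_gt (hΔ n)
    field_simp
    ring
  -- upper bound for all pairs
  have hup : ∀ s s' : unitInterval, (s:ℝ) ≤ (s':ℝ) →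
      dist (σ s) (σ s') ≤ ((s':ℝ) - (s:ℝ)) * D := by
    intro s s' hss
    by_cases hs' : (s':ℝ) ≤ t
    · have hs : (s:ℝ) ≤ t := hss.trans hs'
      rw [hσle s hs, hσle s' hs', hdist, abs_of_nonpos (by linarith), neg_sub]
    · push_neg at hs'
      obtain ⟨n, hn1, hn2⟩ := hfind' s' hs'
      by_cases hs : (s:ℝ) ≤ t
      · have htri := dist_triangle (σ s) (γ (ι (a (n+1)))) (σ s')
        have e1 : dist (σ s) (γ (ι (a (n+1)))) = (a (n+1) - (s:ℝ)) * D := by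
          rw [hσle s hs]
          have := hdist s (ι (a (n+1)))
          rw [hι _ (hamem (n+1))] at this
          rw [this, abs_of_nonpos (by linarith [hagt (n+1)]), neg_sub]
        have e2 : dist (γ (ι (a (n+1)))) (σ s') = ((s':ℝ) - a (n+1)) * D := by
          rw [dist_comm]; exact hd1 s' n hn1 hn2
        rw [e1, e2] at htri
        calc dist (σ s) (σ s') ≤ (a (n+1) - (s:ℝ)) * D + ((s':ℝ) - a (n+1)) * D := htri
          _ = ((s':ℝ) - (s:ℝ)) * D := by ring
      · push_neg at hs
        obtain ⟨m, hm1, hm2⟩ := hfind' s hs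
        rcases eq_or_ne m n with rfl | hmn
        · rw [hd3 s s' m hm1 hm2 hn1 hn2, abs_of_nonpos (by linarith), neg_sub]
        · have hnm : n < m := by
            by_contra hcon
            push_neg at hcon
            have hlt : m < n := lt_of_le_of_ne hcon hmn
            have : a n ≤ a (m+1) := hSA.antitone (Nat.succ_le_of_lt hlt)
            linarith
          have haux : a m ≤ a (n+1) := hSA.antitone (Nat.succ_le_of_lt hnm)
          have htri := dist_triangle4 (σ s) (γ (ι (a m))) (γ (ι (a (n+1)))) (σ s')
          have e1 : dist (σ s) (γ (ι (a m))) = (a m - (s:ℝ)) * D := hd2 s m hm1 hm2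
          have e2 : dist (γ (ι (a m))) (γ (ι (a (n+1)))) = (a (n+1) - a m) * D := by
            rw [hγd _ _ (hamem m) (hamem (n+1)), abs_of_nonpos (by linarith)]
            ring
          have e3 : dist (γ (ι (a (n+1)))) (σ s') = ((s':ℝ) - a (n+1)) * D := by
            rw [dist_comm]; exact hd1 s' n hn1 hn2
          rw [e1, e2, e3] at htri
          calc dist (σ s) (σ s')
              ≤ (a m - (s:ℝ)) * D + (a (n+1) - a m) * D + ((s':ℝ) - a (n+1)) * D := htri
            _ = ((s':ℝ) - (s:ℝ)) * D := by ring
  -- endpoints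
  have h0le : ((0:unitInterval):ℝ) = 0 := rfl
  have h1le : ((1:unitInterval):ℝ) = 1 := rfl
  have hσ0 : σ 0 = γ 0 := hσle 0 (by rw [h0le]; linarith)
  have hσ1 : σ 1 = γ 1 := by
    have h1a : a 1 < ((1:unitInterval):ℝ) := by rw [h1le, ← ha0]; exact hanti 0
    have h2a : ((1:unitInterval):ℝ) ≤ a 0 := by rw [h1le, ha0]
    have := hd2 1 0 h1a h2a
    rw [h1le, ha0, sub_self, zero_mul, dist_eq_zero] at this
    rw [this]
    have : ι (1:ℝ) = 1 := Subtype.ext (hι 1 (by norm_num))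
    rw [this]
  -- σ is a geodesic
  have hgeod : ∀ s s' : unitInterval, dist (σ s) (σ s') = |(s:ℝ) - (s':ℝ)| * D := by
    have key : ∀ s s' : unitInterval, (s:ℝ) ≤ (s':ℝ) →
        dist (σ s) (σ s') = ((s':ℝ) - (s:ℝ)) * D := by
      intro s s' h
      refine le_antisymm (hup s s' h) ?_
      have h1 := hup 0 s (by rw [h0le]; exact s.2.1)
      have h2 := hup s' 1 (by rw [h1le]; exact s'.2.2)
      rw [h0le] at h1
      rw [h1le] at h2
      have h3 : D ≤ dist (σ 0) (σ s) + dist (σ s) (σ s') + dist (σ s') (σ 1) := by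
        rw [hD, ← hσ0, ← hσ1]
        exact dist_triangle4 (σ 0) (σ s) (σ s') (σ 1)
      linarith
    intro s s'
    rcases le_total (s:ℝ) (s':ℝ) with h | h
    · rw [key s s' h, abs_of_nonpos (by linarith), neg_sub]
    · rw [dist_comm, key s' s h, abs_of_nonneg (by linarith)]
  -- σ differs from γ in each interval
  have hdiff : ∀ n, ∃ s : unitInterval,
      a (n+1) < (s:ℝ) ∧ (s:ℝ) < a n ∧ σ s ≠ γ s := by
    intro n
    obtain ⟨r, hr⟩ := Function.ne_iff.1 (hτne n)
    have hr0 : (r:ℝ) ≠ 0 := by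
      intro h0
      have : r = 0 := Subtype.ext h0
      rw [this, hτ0 n, hγres0 n] at hr
      exact hr rfl
    have hr1 : (r:ℝ) ≠ 1 := by
      intro h0
      have : r = 1 := Subtype.ext h0
      rw [this, hτ1 n, hγres1 n] at hr
      exact hr rfl
    have hrpos : 0 < (r:ℝ) := lt_of_le_of_ne r.2.1 (Ne.symm hr0)
    have hrlt : (r:ℝ) < 1 := lt_of_le_of_ne r.2.2 hr1
    set x := a (n+1) + (r:ℝ) * (a n - a (n+1)) with hxdef
    have hx1 : a (n+1) < x := by nlinarith [hΔ n]
    have hx2 : x < a n := by nlinarith [hΔ n]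
    have hxmem : x ∈ Set.Icc (0:ℝ) 1 := by
      constructor
      · have := (hamem (n+1)).1; linarith
      · have := hale n; linarith
    refine ⟨ι x, ?_, ?_, ?_⟩
    · rw [hι x hxmem]; exact hx1
    · rw [hι x hxmem]; exact hx2
    · have hb1 : a (n+1) < ((ι x : unitInterval):ℝ) := by rw [hι x hxmem]; exact hx1
      have hb2 : ((ι x : unitInterval):ℝ) ≤ a n := by rw [hι x hxmem]; exact hx2.le
      rw [hσbr (ι x) n hb1 hb2]
      have harg : (((ι x : unitInterval):ℝ) - a (n+1)) / (a n - a (n+1)) = (r:ℝ) := by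
        rw [hι x hxmem, hxdef]
        have hΔne : a n - a (n+1) ≠ 0 := ne_of_gt (hΔ n)
        rw [add_sub_cancel_left, mul_div_assoc, div_self hΔne, mul_one]
      rw [harg]
      have hιr : ι (r:ℝ) = r := Subtype.ext (hι (r:ℝ) r.2)
      rw [hιr]
      have hγx : γ (ι x) = γres n r := by rw [hγresdef]
      rw [hγx]
      exact hr
  -- the infimum computation
  refine ⟨σ, ⟨hσ0, hσ1, fun s s' => hgeod s s'⟩, ?_⟩
  set S := Subtype.val '' {s : unitInterval | 0 < (s:ℝ) ∧ (s:ℝ) < 1 ∧ σ s ≠ γ s} with hSdef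
  have hlbS : ∀ x ∈ S, t < x := by
    rintro x ⟨s, ⟨hs0, hs1, hsne⟩, rfl⟩
    by_contra h
    push_neg at h
    exact hsne (hσle s h)
  have hbdd : BddBelow S := ⟨t, fun x hx => (hlbS x hx).le⟩
  have hSne : S.Nonempty := by
    obtain ⟨s, h1, h2, h3⟩ := hdiff 0
    exact ⟨(s:ℝ), ⟨s, ⟨ht0.trans ((hagt 1).trans h1), by rw [← ha0]; exact h2, h3⟩, rfl⟩⟩
  refine le_antisymm ?_ (le_csInf hSne (fun x hx => (hlbS x hx).le))
  have hin : ∀ n, sInf S ≤ a n := by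
    intro n
    obtain ⟨s, h1, h2, h3⟩ := hdiff n
    have hmemS : (s:ℝ) ∈ S :=
      ⟨s, ⟨ht0.trans ((hagt (n+1)).trans h1), lt_of_lt_of_le h2 (hale n), h3⟩, rfl⟩
    exact (csInf_le hbdd hmemS).trans h2.le
  exact ge_of_tendsto hatend (Filter.Eventually.of_forall hin)
end
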